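/- arXiv:2412.11110 — 5 statements merged into one kernel-verified Lean document; each statement's English description precedes it below -/
import Mathlib

section
/- Let u = αx + βy + γz with α, β, γ ∈ O_K and ν_D(u) = 1/2 (note τ(u) = -u, so u is a (-1)-symmetric element of value 1/2). Then ν_K(β² - aγ²) = 0 (i.e. β + γx is a unit of the ring of integers of the field K(x)) and there exists an invertible t ∈ D with u = τ(t)·(βy + γz)·t; that is, ⟨u⟩ ≅ ⟨βy + γz⟩ as skew-hermitian forms over (D, τ). -/
noncomputable section

/-- A surjective discrete valuation `ν : K → ℤ` on a field `K`
(the value of `ν` at `0` is irrelevant: only nonzero elements are constrained). -/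
structure DVal (K : Type) [Field K] : Type where
  ν : K → ℤ
  ν_mul : ∀ x y : K, x ≠ 0 → y ≠ 0 → ν (x * y) = ν x + ν y
  ν_add : ∀ x y : K, x ≠ 0 → y ≠ 0 → x + y ≠ 0 → min (ν x) (ν y) ≤ ν (x + y)
  ν_one : ν 1 = 0
  ν_surj : ∀ n : ℤ, ∃ x : K, x ≠ 0 ∧ ν x = n

namespace DVal

variable {K : Type} [Field K]

/-- `x` belongs to the valuation ring `O_K`. -/
def Int (V : DVal K) (x : K) : Prop := x = 0 ∨ 0 ≤ V.ν x

/-- `x` is a unit of the valuation ring `O_K`. -/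
def IntUnit (V : DVal K) (x : K) : Prop := x ≠ 0 ∧ V.ν x = 0

/-- `x` belongs to the maximal ideal `m_K` of the valuation ring `O_K`. -/
def MaxIdeal (V : DVal K) (x : K) : Prop := x = 0 ∨ 1 ≤ V.ν x

/-- `K` is complete with respect to the valuation `ν`: every Cauchy sequence converges. -/
def IsComplete (V : DVal K) : Prop :=
  ∀ f : ℕ → K,
    (∀ M : ℤ, ∃ N : ℕ, ∀ m n : ℕ, N ≤ m → N ≤ n →
      f m - f n = 0 ∨ M ≤ V.ν (f m - f n)) →
    ∃ L : K, ∀ M : ℤ, ∃ N : ℕ, ∀ n : ℕ, N ≤ n →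
      f n - L = 0 ∨ M ≤ V.ν (f n - L)

/-- The residue field `k = O_K/m_K` has characteristic different from `2`,
i.e. `2` is a unit of the valuation ring `O_K`. -/
def ResCharNeTwo (V : DVal K) : Prop := (2 : K) ≠ 0 ∧ V.ν 2 = 0

/-- auxiliary: `x = 0` or `ν x ≥ M`. -/
def Big (V : DVal K) (M : ℤ) (x : K) : Prop := x = 0 ∨ M ≤ V.ν x

variable (V : DVal K)

theorem nu_neg_one : V.ν (-1 : K) = 0 := by
  have h := V.ν_mul (-1) (-1) (by norm_num) (by norm_num)
  have e : ((-1 : K) * -1) = 1 := by ring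
  rw [e, V.ν_one] at h; omega

theorem nu_neg (x : K) (hx : x ≠ 0) : V.ν (-x) = V.ν x := by
  have h := V.ν_mul (-1) x (by norm_num) hx
  rw [neg_one_mul] at h; rw [h, V.nu_neg_one, zero_add]

theorem nu_inv (x : K) (hx : x ≠ 0) : V.ν x⁻¹ = - V.ν x := by
  have h := V.ν_mul x x⁻¹ hx (inv_ne_zero hx)
  rw [mul_inv_cancel₀ hx, V.ν_one] at h; omega

theorem nu_sq (x : K) (hx : x ≠ 0) : V.ν (x ^ 2) = 2 * V.ν x := by
  have h := V.ν_mul x x hx hx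
  rw [show x * x = x ^ 2 by ring] at h; omega

theorem big_of_le {M M' : ℤ} (h : M' ≤ M) {x : K} (hx : V.Big M x) : V.Big M' x := by
  rcases hx with h0 | h0
  · exact Or.inl h0
  · exact Or.inr (le_trans h h0)

theorem big_neg {M : ℤ} {x : K} (hx : V.Big M x) : V.Big M (-x) := by
  by_cases h0 : x = 0
  · subst h0; exact Or.inl (by ring)
  · rcases hx with h | h
    · exact absurd h h0
    · exact Or.inr (by rw [V.nu_neg x h0]; exact h)

theorem big_add {M : ℤ} {x y : K} (hx : V.Big M x) (hy : V.Big M y) : V.Big M (x + y) := by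
  by_cases hxy : x + y = 0
  · exact Or.inl hxy
  by_cases hx0 : x = 0
  · subst hx0; rw [zero_add]; rw [zero_add] at hxy
    rcases hy with h | h; · exact absurd h hxy
    · exact Or.inr h
  by_cases hy0 : y = 0
  · subst hy0; rw [add_zero]; rw [add_zero] at hxy
    rcases hx with h | h; · exact absurd h hx0
    · exact Or.inr h
  rcases hx with h | hvx; · exact absurd h hx0
  rcases hy with h | hvy; · exact absurd h hy0
  refine Or.inr ?_
  have := V.ν_add x y hx0 hy0 hxy
  have : min (V.ν x) (V.ν y) ≤ V.ν (x + y) := this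
  omega

theorem big_mul {M N : ℤ} {x y : K} (hx : V.Big M x) (hy : V.Big N y) :
    V.Big (M + N) (x * y) := by
  by_cases hx0 : x = 0
  · exact Or.inl (by rw [hx0, zero_mul])
  by_cases hy0 : y = 0
  · exact Or.inl (by rw [hy0, mul_zero])
  rcases hx with h | hvx; · exact absurd h hx0
  rcases hy with h | hvy; · exact absurd h hy0
  exact Or.inr (by rw [V.ν_mul x y hx0 hy0]; omega)

theorem big_unit {x : K} (h : V.Big 1 (x - 1)) : x ≠ 0 ∧ V.ν x = 0 := by
  by_cases hd0 : x - 1 = 0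
  · have : x = 1 := by linear_combination hd0
    subst this; exact ⟨one_ne_zero, V.ν_one⟩
  have hx0 : x ≠ 0 := by
    rintro rfl
    rcases h with h | h
    · exact hd0 h
    · rw [zero_sub, V.nu_neg_one] at h; omega
  refine ⟨hx0, ?_⟩
  rcases h with h | h
  · exact absurd h hd0
  · have h1 : (1 : K) ≠ 0 := one_ne_zero
    have hlow := V.ν_add 1 (x - 1) h1 hd0 (by rw [add_sub_cancel]; exact hx0)
    rw [add_sub_cancel, V.ν_one] at hlow
    have h2 : 1 - x ≠ 0 := by
      intro h0; apply hd0; linear_combination -h0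
    have h3 := V.ν_add x (1 - x) hx0 h2 (by rw [add_sub_cancel]; exact h1)
    rw [add_sub_cancel, V.ν_one] at h3
    have h4 : V.ν (1 - x) = V.ν (x - 1) := by
      rw [show (1 : K) - x = -(x - 1) by ring, V.nu_neg _ hd0]
    omega

theorem nu_add_of_lt {x y : K} (hx : x ≠ 0) (hy : y ≠ 0) (h : V.ν x < V.ν y) :
    V.ν (x + y) = V.ν x := by
  have hxy : x + y ≠ 0 := by
    intro h0
    have : y = -x := by linear_combination h0
    rw [this, V.nu_neg _ hx] at h; omega
  have h1 := V.ν_add x y hx hy hxy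
  have h2 := V.ν_add (x + y) (-y) hxy (neg_ne_zero.mpr hy)
    (by rw [show x + y + -y = x by ring]; exact hx)
  rw [show x + y + -y = x by ring, V.nu_neg _ hy] at h2
  omega

theorem hensel_sqrt (V : DVal K) (hcomp : V.IsComplete) (h2 : (2:K) ≠ 0)
    (hv2 : V.ν 2 = 0) {c : K} (hc : V.Big 1 (c - 1)) :
    ∃ r : K, r ^ 2 = c ∧ V.Big 1 (r - 1) := by
  have hc0 : c ≠ 0 := by
    rintro rfl
    rcases hc with h | h
    · norm_num at h
    · rw [zero_sub, V.nu_neg_one] at h; omega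
  set f : ℕ → K := fun n => (fun r => (r + c / r) / 2)^[n] 1 with hf
  have hstep : ∀ n, f (n + 1) = (f n + c / f n) / 2 := by
    intro n
    simp only [hf, Function.iterate_succ_apply']
  have inv : ∀ n, V.Big 1 (f n - 1) ∧ V.Big (n + 1) (f n ^ 2 - c) := by
    intro n
    induction n with
    | zero =>
      constructor
      · exact Or.inl (by simp [hf])
      · have : f 0 ^ 2 - c = -(c - 1) := by simp only [hf, Function.iterate_zero_apply]; ring
        rw [this]
        exact V.big_neg (by exact_mod_cast hc)
    | succ n ih =>
      obtain ⟨h1, h2'⟩ := ih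
      obtain ⟨hr0, hrv⟩ := V.big_unit h1
      have h2r0 : (2 : K) * f n ≠ 0 := mul_ne_zero h2 hr0
      have e1 : f (n + 1) - f n = (c - f n ^ 2) * ((2 * f n)⁻¹) := by
        rw [hstep]; field_simp; ring
      have e2 : f (n + 1) ^ 2 - c = ((f n ^ 2 - c) * (f n ^ 2 - c)) * (((2 * f n) ^ 2)⁻¹) := by
        rw [hstep]; field_simp; ring
      have hinv0 : V.Big 0 ((2 * f n)⁻¹) := by
        refine Or.inr ?_
        rw [V.nu_inv _ h2r0, V.ν_mul 2 (f n) h2 hr0, hv2, hrv]; norm_num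
      have hinvsq0 : V.Big 0 (((2 * f n) ^ 2)⁻¹) := by
        refine Or.inr ?_
        rw [V.nu_inv _ (pow_ne_zero 2 h2r0), V.nu_sq _ h2r0,
          V.ν_mul 2 (f n) h2 hr0, hv2, hrv]; norm_num
      have hdiff : V.Big (n + 1) (f (n + 1) - f n) := by
        rw [e1]
        have := V.big_mul (V.big_neg h2') hinv0
        rw [show -(f n ^ 2 - c) = c - f n ^ 2 by ring] at this
        simpa using this
      constructor
      · have e3 : f (n + 1) - 1 = (f (n + 1) - f n) + (f n - 1) := by ring
        rw [e3]
        exact V.big_add (V.big_of_le (by omega) hdiff) h1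
      · rw [e2]
        have := V.big_mul (V.big_mul h2' h2') hinvsq0
        exact V.big_of_le (by omega) this
  have hdiffs : ∀ m : ℕ, V.Big ((m : ℤ) + 1) (f (m + 1) - f m) := by
    intro m
    obtain ⟨h1, h2'⟩ := inv m
    obtain ⟨hr0, hrv⟩ := V.big_unit h1
    have h2r0 : (2 : K) * f m ≠ 0 := mul_ne_zero h2 hr0
    have e1 : f (m + 1) - f m = (c - f m ^ 2) * ((2 * f m)⁻¹) := by
      rw [hstep]; field_simp; ring
    rw [e1]
    have hinv0 : V.Big 0 ((2 * f m)⁻¹) := by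
      refine Or.inr ?_
      rw [V.nu_inv _ h2r0, V.ν_mul 2 (f m) h2 hr0, hv2, hrv]; norm_num
    have := V.big_mul (V.big_neg h2') hinv0
    rw [show -(f m ^ 2 - c) = c - f m ^ 2 by ring] at this
    simpa using this
  have cauchy : ∀ n m : ℕ, n ≤ m → V.Big ((n : ℤ) + 1) (f m - f n) := by
    intro n m h
    induction m, h using Nat.le_induction with
    | base => exact Or.inl (sub_self _)
    | succ m hm ih =>
      have e : f (m + 1) - f n = (f (m + 1) - f m) + (f m - f n) := by ring
      rw [e]
      exact V.big_add (V.big_of_le (by omega) (hdiffs m)) ih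
  obtain ⟨L, hL⟩ := hcomp f (by
    intro M
    refine ⟨M.toNat, ?_⟩
    intro m n hm hn
    have hM : M ≤ (M.toNat : ℤ) := Int.self_le_toNat M
    rcases le_total n m with h | h
    · have := cauchy n m h
      refine V.big_of_le ?_ this
      have hn' : (M.toNat : ℤ) ≤ (n : ℤ) := Int.ofNat_le.mpr hn
      omega
    · have := V.big_neg (cauchy m n h)
      rw [neg_sub] at this
      refine V.big_of_le ?_ this
      have hm' : (M.toNat : ℤ) ≤ (m : ℤ) := Int.ofNat_le.mpr hm
      omega)
  have hL1 : V.Big 1 (L - 1) := by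
    obtain ⟨N, hN⟩ := hL 1
    have hfnL : V.Big 1 (f N - L) := hN N le_rfl
    have e : L - 1 = -(f N - L) + (f N - 1) := by ring
    rw [e]
    exact V.big_add (V.big_neg hfnL) (inv N).1
  have hsq : L ^ 2 = c := by
    by_contra hne
    have hd0 : L ^ 2 - c ≠ 0 := sub_ne_zero.mpr hne
    set M := V.ν (L ^ 2 - c) with hM
    obtain ⟨N1, hN1⟩ := hL (M + 1)
    set n := max N1 (M + 1).toNat with hn
    have hfn : V.Big (M + 1) (f n - L) := hN1 n (le_max_left _ _)
    obtain ⟨h1', h2'⟩ := inv n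
    have key : V.Big (M + 1) (L ^ 2 - c) := by
      have e : L ^ 2 - c = (L - f n) * (L + f n) + (f n ^ 2 - c) := by ring
      rw [e]
      apply V.big_add
      · have hLf : V.Big (M + 1) (L - f n) := by
          have := V.big_neg hfn; rwa [neg_sub] at this
        have hsum : V.Big 0 (L + f n) := by
          have e2 : L + f n = (L - 1) + (f n - 1) + 2 := by ring
          rw [e2]
          exact V.big_add (V.big_add (V.big_of_le (by omega) hL1)
            (V.big_of_le (by omega) h1')) (Or.inr (le_of_eq hv2.symm))
        have := V.big_mul hLf hsum
        simpa using this
      · refine V.big_of_le ?_ h2'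
        have ht : ((M + 1).toNat : ℤ) ≤ (n : ℤ) := by
          exact_mod_cast le_max_right N1 (M + 1).toNat
        have := Int.self_le_toNat (M + 1)
        omega
    rcases key with h | h
    · exact hd0 h
    · omega
  exact ⟨L, hsq, hL1⟩

end DVal

/-- The reduced norm of a quaternion `u = δ + αx + βy + γz ∈ ℍ[K,a,b]`:
`Nrd u = u·τ(u) = δ² - aα² - bβ² + abγ²`. -/
def qnrd {K : Type} [Field K] (a b : K) (u : QuaternionAlgebra K a 0 b) : K :=
  u.re ^ 2 - a * u.imI ^ 2 - b * u.imJ ^ 2 + a * b * u.imK ^ 2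

/-- The canonical involution `τ(δ + αx + βy + γz) = δ - αx - βy - γz` of `ℍ[K,a,b]`. -/
def qtau {K : Type} [Field K] {a b : K} (u : QuaternionAlgebra K a 0 b) :
    QuaternionAlgebra K a 0 b :=
  ⟨u.re, -u.imI, -u.imJ, -u.imK⟩

/-- The norm form `⟨1,-a,-b,ab⟩` of `ℍ[K,a,b]` is anisotropic over `K`
(equivalently, `ℍ[K,a,b]` is a division ring). -/
def QAniso {K : Type} [Field K] (a b : K) : Prop :=
  ∀ d e f g : K, d ^ 2 - a * e ^ 2 - b * f ^ 2 + a * b * g ^ 2 = 0 →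
    d = 0 ∧ e = 0 ∧ f = 0 ∧ g = 0

/-- The valuation `ν_D(u) = (1/2)·ν_K(Nrd u)` of the quaternion division algebra
`D = ℍ[K,a,b]` (at nonzero `u`). -/
def qnu {K : Type} [Field K] (V : DVal K) (a b : K) (u : QuaternionAlgebra K a 0 b) : ℚ :=
  (V.ν (qnrd a b u) : ℚ) / 2


theorem q_mul_qtau {K : Type} [Field K] {a b : K} (q : QuaternionAlgebra K a 0 b) :
    q * qtau q = (qnrd a b q) • (1 : QuaternionAlgebra K a 0 b) := by
  ext <;> simp [qtau, qnrd] <;> ring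

theorem qtau_mul_q {K : Type} [Field K] {a b : K} (q : QuaternionAlgebra K a 0 b) :
    qtau q * q = (qnrd a b q) • (1 : QuaternionAlgebra K a 0 b) := by
  ext <;> simp [qtau, qnrd] <;> ring

theorem qnrd_smul {K : Type} [Field K] {a b : K} (s : K) (q : QuaternionAlgebra K a 0 b) :
    qnrd a b (s • q) = s ^ 2 * qnrd a b q := by
  simp [qnrd]; ring

theorem key_id {K : Type} [Field K] (a p al be ga ro : K)
    (hrel : ro^2*(p*(be^2 - a*ga^2)) = a*al^2 + p*(be^2 - a*ga^2)) :
    (⟨p*(be^2 - a*ga^2)*ro + p*(be^2 - a*ga^2), 0, a*al*ga, al*be⟩ : QuaternionAlgebra K a 0 p) *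
      ⟨0,0,be,ga⟩ * ⟨p*(be^2 - a*ga^2)*ro + p*(be^2 - a*ga^2), 0, -(a*al*ga), -(al*be)⟩
    = ((p*(be^2 - a*ga^2))^2*(2+2*ro)) • (⟨0, al, be, ga⟩ : QuaternionAlgebra K a 0 p) := by
  ext
  · simp; linear_combination (0:K) * hrel
  · simp; linear_combination (0:K) * hrel
  · simp; linear_combination (p*(be^2 - a*ga^2)*be) * hrel
  · simp; linear_combination (p*(be^2 - a*ga^2)*ga) * hrel

theorem nrdB_id {K : Type} [Field K] (a p al be ga ro si : K)
    (hrel : ro^2*(p*(be^2 - a*ga^2)) = a*al^2 + p*(be^2 - a*ga^2))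
    (hsig : si^2 = 2 + 2*ro) :
    qnrd a p (⟨p*(be^2 - a*ga^2)*ro + p*(be^2 - a*ga^2), 0, -(a*al*ga), -(al*be)⟩ :
      QuaternionAlgebra K a 0 p) = (p*(be^2 - a*ga^2))^2*ro*si^2 := by
  show (p*(be^2 - a*ga^2)*ro + p*(be^2 - a*ga^2))^2 - a*0^2 - p*(-(a*al*ga))^2
      + a*p*(-(al*be))^2 = (p*(be^2 - a*ga^2))^2*ro*si^2
  linear_combination (-((p*(be^2 - a*ga^2))^2*ro)) * hsig + (-(p*(be^2 - a*ga^2))) * hrel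

/-- if `u = αx + βy + γz` is `(-1)`-symmetric of value `1/2` then `β + γx` is a
unit of the ring of integers of `K(x)` (i.e. `ν_K(β² - aγ²) = 0`) and `⟨u⟩ ≅ ⟨βy + γz⟩`
over `(D, τ)`. -/
theorem stmt_8 (K : Type) [Field K] (V : DVal K)
    -- K is complete with residue field of characteristic ≠ 2
    (hcomp : V.IsComplete) (hchar : V.ResCharNeTwo)
    -- D = ℍ[K,a,ϖ] with a ∈ O_K^×, ϖ a uniformizer, D a division ring
    (a ϖ : K) (ha0 : a ≠ 0) (hva : V.ν a = 0) (hϖ0 : ϖ ≠ 0) (hvϖ : V.ν ϖ = 1)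
    (haniso : QAniso a ϖ)
    -- u = αx + βy + γz with coordinates in O_K and ν_D(u) = 1/2
    (α β γ : K) (hα : V.Int α) (hβ : V.Int β) (hγ : V.Int γ)
    (hu0 : (⟨0, α, β, γ⟩ : QuaternionAlgebra K a 0 ϖ) ≠ 0)
    (hval : qnu V a ϖ (⟨0, α, β, γ⟩ : QuaternionAlgebra K a 0 ϖ) = 1 / 2) :
    V.IntUnit (β ^ 2 - a * γ ^ 2) ∧ ∃ t : QuaternionAlgebra K a 0 ϖ, IsUnit t ∧
      (⟨0, α, β, γ⟩ : QuaternionAlgebra K a 0 ϖ) =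
        qtau t * (⟨0, 0, β, γ⟩ : QuaternionAlgebra K a 0 ϖ) * t := by
  obtain ⟨h2ne, h2v⟩ := hchar
  have hne : ¬(α = 0 ∧ β = 0 ∧ γ = 0) := by
    rintro ⟨rfl, rfl, rfl⟩
    exact hu0 rfl
  have hq0 : qnrd a ϖ (⟨0, α, β, γ⟩ : QuaternionAlgebra K a 0 ϖ) ≠ 0 := by
    intro h
    obtain ⟨-, h1, h2', h3⟩ := haniso 0 α β γ h
    exact hne ⟨h1, h2', h3⟩
  have hν1 : V.ν (qnrd a ϖ (⟨0, α, β, γ⟩ : QuaternionAlgebra K a 0 ϖ)) = 1 := by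
    have h := hval
    rw [qnu] at h
    field_simp at h
    exact_mod_cast h
  have hqe : qnrd a ϖ (⟨0, α, β, γ⟩ : QuaternionAlgebra K a 0 ϖ)
      = -(a*α^2 + ϖ*(β^2 - a*γ^2)) := by
    show (0:K)^2 - a*α^2 - ϖ*β^2 + a*ϖ*γ^2 = -(a*α^2 + ϖ*(β^2 - a*γ^2))
    ring
  have hμ0 : a*α^2 + ϖ*(β^2 - a*γ^2) ≠ 0 := by
    intro h
    apply hq0
    rw [hqe, h, neg_zero]
  have hνμ : V.ν (a*α^2 + ϖ*(β^2 - a*γ^2)) = 1 := by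
    have h := hν1
    rw [hqe, V.nu_neg _ hμ0] at h
    exact h
  have hN0 : β^2 - a*γ^2 ≠ 0 := by
    intro h
    obtain ⟨hb, hg, -, -⟩ := haniso β γ 0 0
      (by rw [show β^2 - a*γ^2 - ϖ*0^2 + a*ϖ*0^2 = β^2 - a*γ^2 by ring, h])
    have hα0 : α ≠ 0 := by
      rintro rfl; exact hne ⟨rfl, hb, hg⟩
    subst hb; subst hg
    have e : a*α^2 + ϖ*((0:K)^2 - a*0^2) = a*α^2 := by ring
    rw [e] at hνμ
    rw [V.ν_mul a (α^2) ha0 (pow_ne_zero 2 hα0), hva, V.nu_sq _ hα0] at hνμ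
    omega
  have hνN0 : 0 ≤ V.ν (β^2 - a*γ^2) := by
    have h1 : V.Big 0 (β^2 - a*γ^2) := by
      have hb : V.Big 0 β := hβ
      have hg : V.Big 0 γ := hγ
      have ha' : V.Big 0 a := Or.inr (le_of_eq hva.symm)
      have h := V.big_add (V.big_mul hb hb) (V.big_neg (V.big_mul ha' (V.big_mul hg hg)))
      have e : β^2 - a*γ^2 = β*β + -(a*(γ*γ)) := by ring
      rw [e]
      exact V.big_of_le (by norm_num) h
    rcases h1 with h | h
    · exact absurd h hN0
    · exact h
  have hkey : V.ν (β^2 - a*γ^2) = 0 ∧ (α = 0 ∨ (α ≠ 0 ∧ 1 ≤ V.ν α)) := by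
    by_cases hα0 : α = 0
    · subst hα0
      constructor
      · have e : a*(0:K)^2 + ϖ*(β^2 - a*γ^2) = ϖ*(β^2 - a*γ^2) := by ring
        rw [e, V.ν_mul ϖ _ hϖ0 hN0, hvϖ] at hνμ
        omega
      · exact Or.inl rfl
    · have hX0 : a*α^2 ≠ 0 := mul_ne_zero ha0 (pow_ne_zero 2 hα0)
      have hY0 : ϖ*(β^2 - a*γ^2) ≠ 0 := mul_ne_zero hϖ0 hN0
      have hνX : V.ν (a*α^2) = 2 * V.ν α := by
        rw [V.ν_mul _ _ ha0 (pow_ne_zero 2 hα0), hva, V.nu_sq _ hα0]; omega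
      have hνY : V.ν (ϖ*(β^2 - a*γ^2)) = 1 + V.ν (β^2 - a*γ^2) := by
        rw [V.ν_mul _ _ hϖ0 hN0, hvϖ]
      have hνα0 : 0 ≤ V.ν α := by
        rcases hα with h | h
        · exact absurd h hα0
        · exact h
      by_cases hXY : V.ν (a*α^2) = V.ν (ϖ*(β^2 - a*γ^2))
      · exfalso
        have hmin := V.ν_add _ _ hX0 hY0 hμ0
        rw [hνμ] at hmin
        omega
      · rcases lt_or_gt_of_ne hXY with h | h
        · exfalso
          have h' := V.nu_add_of_lt hX0 hY0 h
          rw [hνμ, hνX] at h'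
          omega
        · have h' := V.nu_add_of_lt hY0 hX0 h
          rw [show ϖ*(β^2 - a*γ^2) + a*α^2 = a*α^2 + ϖ*(β^2 - a*γ^2) by ring,
            hνμ, hνY] at h'
          refine ⟨by omega, Or.inr ⟨hα0, by omega⟩⟩
  obtain ⟨hνN, hαm⟩ := hkey
  refine ⟨⟨hN0, hνN⟩, ?_⟩
  -- Part 2
  have hl0 : ϖ*(β^2 - a*γ^2) ≠ 0 := mul_ne_zero hϖ0 hN0
  have hνl : V.ν (ϖ*(β^2 - a*γ^2)) = 1 := by
    rw [V.ν_mul _ _ hϖ0 hN0, hvϖ, hνN]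
    omega
  have hcbig : V.Big 1 ((a*α^2 + ϖ*(β^2 - a*γ^2)) * (ϖ*(β^2 - a*γ^2))⁻¹ - 1) := by
    have e : (a*α^2 + ϖ*(β^2 - a*γ^2)) * (ϖ*(β^2 - a*γ^2))⁻¹ - 1
        = (a*α^2) * (ϖ*(β^2 - a*γ^2))⁻¹ := by
      field_simp
      ring
    rw [e]
    rcases hαm with h | ⟨hα0, hνα⟩
    · exact Or.inl (by rw [h]; ring)
    · refine Or.inr ?_
      rw [V.ν_mul _ _ (mul_ne_zero ha0 (pow_ne_zero 2 hα0)) (inv_ne_zero hl0),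
        V.nu_inv _ hl0, hνl, V.ν_mul _ _ ha0 (pow_ne_zero 2 hα0), hva, V.nu_sq _ hα0]
      omega
  obtain ⟨ρ, hρsq, hρ1⟩ := V.hensel_sqrt hcomp h2ne h2v hcbig
  obtain ⟨hρ0, hνρ⟩ := V.big_unit hρ1
  have hρrel : ρ^2 * (ϖ*(β^2 - a*γ^2)) = a*α^2 + ϖ*(β^2 - a*γ^2) := by
    rw [hρsq]
    field_simp
  have hc2big : V.Big 1 ((1+ρ) * (2:K)⁻¹ - 1) := by
    have e : (1+ρ)*(2:K)⁻¹ - 1 = (ρ - 1) * (2:K)⁻¹ := by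
      field_simp
      ring
    rw [e]
    have h2inv : V.Big 0 ((2:K)⁻¹) := Or.inr (by rw [V.nu_inv _ h2ne, h2v]; omega)
    have h := V.big_mul hρ1 h2inv
    simpa using h
  obtain ⟨σ₀, hσ₀sq, hσ₀1⟩ := V.hensel_sqrt hcomp h2ne h2v hc2big
  obtain ⟨hσ₀0, -⟩ := V.big_unit hσ₀1
  obtain ⟨σ, hσ0, hσrel⟩ : ∃ σ : K, σ ≠ 0 ∧ σ^2 = 2 + 2*ρ := by
    refine ⟨2*σ₀, mul_ne_zero h2ne hσ₀0, ?_⟩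
    have e : ((2:K)*σ₀)^2 = 4 * ((1+ρ) * (2:K)⁻¹) := by
      rw [show ((2:K)*σ₀)^2 = 4*σ₀^2 by ring, hσ₀sq]
    rw [e]
    field_simp
    ring
  have hlσ0 : ϖ*(β^2 - a*γ^2)*σ ≠ 0 := mul_ne_zero hl0 hσ0
  have hB : qnrd a ϖ (⟨ϖ*(β^2 - a*γ^2)*ρ + ϖ*(β^2 - a*γ^2), 0, -(a*α*γ), -(α*β)⟩ :
      QuaternionAlgebra K a 0 ϖ) = (ϖ*(β^2 - a*γ^2))^2*ρ*σ^2 :=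
    nrdB_id a ϖ α β γ ρ σ hρrel hσrel
  obtain ⟨t, htB, htau⟩ : ∃ t : QuaternionAlgebra K a 0 ϖ,
      t = ((ϖ*(β^2 - a*γ^2)*σ)⁻¹) •
        (⟨ϖ*(β^2 - a*γ^2)*ρ + ϖ*(β^2 - a*γ^2), 0, -(a*α*γ), -(α*β)⟩ :
          QuaternionAlgebra K a 0 ϖ) ∧
      qtau t = ((ϖ*(β^2 - a*γ^2)*σ)⁻¹) •
        (⟨ϖ*(β^2 - a*γ^2)*ρ + ϖ*(β^2 - a*γ^2), 0, a*α*γ, α*β⟩ :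
          QuaternionAlgebra K a 0 ϖ) := by
    refine ⟨_, rfl, ?_⟩
    ext <;> simp [qtau]
  have hnrdt : qnrd a ϖ t = ρ := by
    rw [htB, qnrd_smul, hB]
    field_simp
  refine ⟨t, ?_, ?_⟩
  · refine ⟨⟨t, ρ⁻¹ • qtau t, ?_, ?_⟩, rfl⟩
    · rw [mul_smul_comm, q_mul_qtau, hnrdt, smul_smul, inv_mul_cancel₀ hρ0, one_smul]
    · rw [smul_mul_assoc, qtau_mul_q, hnrdt, smul_smul, inv_mul_cancel₀ hρ0, one_smul]
  · have hmain : qtau t * (⟨0, 0, β, γ⟩ : QuaternionAlgebra K a 0 ϖ) * t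
        = (⟨0, α, β, γ⟩ : QuaternionAlgebra K a 0 ϖ) := by
      rw [htau, htB, smul_mul_assoc, mul_smul_comm, smul_mul_assoc,
        key_id a ϖ α β γ ρ hρrel, smul_smul, smul_smul]
      have hsc : (ϖ*(β^2 - a*γ^2)*σ)⁻¹ * (ϖ*(β^2 - a*γ^2)*σ)⁻¹ *
          ((ϖ*(β^2 - a*γ^2))^2*(2+2*ρ)) = 1 := by
        rw [← hσrel]
        field_simp
      rw [hsc, one_smul]
    exact hmain.symm
end
end

section
/- Let σ = τ_x and let u = δ + βy + γz with δ, β, γ ∈ O_K and ν_D(u) = 1/2 (note σ(u) = u, so u is a symmetric element of value 1/2). Then ν_K(β² - aγ²) = 0 (i.e. β + γx is a unit of the ring of integers of the field K(x)) and there exists an invertible t ∈ D with u = σ(t)·(βy + γz)·t; that is, ⟨u⟩ ≅ ⟨βy + γz⟩ as hermitian forms over (D, τ_x). -/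
noncomputable section

namespace Stmt9

variable {K : Type} [Field K]

/-- `x = 0` or `M ≤ ν x`. -/
def Ok (V : DVal K) (M : ℤ) (x : K) : Prop := x = 0 ∨ M ≤ V.ν x

lemma ok_mono {V : DVal K} {M M' : ℤ} (h : M' ≤ M) {x : K} (hx : Ok V M x) : Ok V M' x :=
  hx.imp id (le_trans h)

lemma nu_neg_one (V : DVal K) : V.ν (-1 : K) = 0 := by
  have h := V.ν_mul (-1) (-1) (by norm_num) (by norm_num)
  rw [neg_mul_neg, one_mul, V.ν_one] at h
  omega

lemma nu_neg (V : DVal K) {x : K} (hx : x ≠ 0) : V.ν (-x) = V.ν x := by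
  have h := V.ν_mul (-1) x (by norm_num) hx
  rw [neg_one_mul, nu_neg_one] at h
  omega

lemma ok_neg {V : DVal K} {M : ℤ} {x : K} (hx : Ok V M x) : Ok V M (-x) := by
  rcases eq_or_ne x 0 with h0 | h0
  · left; rw [h0, neg_zero]
  · rcases hx with h | h
    · exact absurd h h0
    · right; rw [nu_neg V h0]; exact h

lemma ok_add {V : DVal K} {M : ℤ} {x y : K} (hx : Ok V M x) (hy : Ok V M y) :
    Ok V M (x + y) := by
  rcases eq_or_ne x 0 with h0 | h0
  · rw [h0, zero_add]; exact hy
  rcases eq_or_ne y 0 with h1 | h1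
  · rw [h1, add_zero]; exact hx
  rcases eq_or_ne (x + y) 0 with h2 | h2
  · exact Or.inl h2
  · right
    have := V.ν_add x y h0 h1 h2
    have hx' : M ≤ V.ν x := hx.resolve_left h0
    have hy' : M ≤ V.ν y := hy.resolve_left h1
    omega

lemma ok_sub {V : DVal K} {M : ℤ} {x y : K} (hx : Ok V M x) (hy : Ok V M y) :
    Ok V M (x - y) := by
  rw [sub_eq_add_neg]; exact ok_add hx (ok_neg hy)

lemma ok_mul {V : DVal K} {M M' : ℤ} {x y : K} (hx : Ok V M x) (hy : Ok V M' y) :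
    Ok V (M + M') (x * y) := by
  rcases eq_or_ne x 0 with h0 | h0
  · left; rw [h0, zero_mul]
  rcases eq_or_ne y 0 with h1 | h1
  · left; rw [h1, mul_zero]
  right
  rw [V.ν_mul x y h0 h1]
  exact add_le_add (hx.resolve_left h0) (hy.resolve_left h1)

/-- If `ν x < ν y` then `x + y ≠ 0` and `ν (x+y) = ν x`. -/
lemma nu_add_lt (V : DVal K) {x y : K} (hx : x ≠ 0) (hy : y ≠ 0)
    (h : V.ν x < V.ν y) : x + y ≠ 0 ∧ V.ν (x + y) = V.ν x := by
  have hne : x + y ≠ 0 := by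
    intro h0
    have hyx : y = -x := by linear_combination h0
    rw [hyx, nu_neg V hx] at h
    exact lt_irrefl _ h
  refine ⟨hne, ?_⟩
  have h1 := V.ν_add x y hx hy hne
  have h2 := V.ν_add (x + y) (-y) hne (neg_ne_zero.2 hy)
    (by rw [add_neg_cancel_right]; exact hx)
  rw [add_neg_cancel_right] at h2
  rw [nu_neg V hy] at h2
  rw [min_eq_left h.le] at h1
  rcases min_le_iff.mp h2 with h3 | h3
  · omega
  · omega

end Stmt9

namespace Stmt9

variable {K : Type} [Field K]

lemma nu_sq (V : DVal K) {x : K} (hx : x ≠ 0) : V.ν (x ^ 2) = 2 * V.ν x := by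
  have h := V.ν_mul x x hx hx
  rw [← sq] at h
  omega

lemma nu_inv (V : DVal K) {x : K} (hx : x ≠ 0) : V.ν x⁻¹ = -V.ν x := by
  have h := V.ν_mul x x⁻¹ hx (inv_ne_zero hx)
  rw [mul_inv_cancel₀ hx, V.ν_one] at h
  omega

lemma nu_div (V : DVal K) {x y : K} (hx : x ≠ 0) (hy : y ≠ 0) :
    V.ν (x / y) = V.ν x - V.ν y := by
  rw [div_eq_mul_inv, V.ν_mul x y⁻¹ hx (inv_ne_zero hy), nu_inv V hy]
  ring

/-- If `e ≡ 0 (mod m)` then `1 + e` is a unit of `O_K`. -/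
lemma nu_one_add (V : DVal K) {e : K} (he : Ok V 1 e) :
    1 + e ≠ 0 ∧ V.ν (1 + e) = 0 := by
  rcases eq_or_ne e 0 with h0 | h0
  · rw [h0, add_zero]; exact ⟨one_ne_zero, V.ν_one⟩
  · have h1 : V.ν (1 : K) < V.ν e := by
      rw [V.ν_one]; exact lt_of_lt_of_le one_pos (he.resolve_left h0)
    have := nu_add_lt V one_ne_zero h0 h1
    rw [V.ν_one] at this
    exact this

open Classical in
/-- The Newton iteration for `X² = c`. -/
private noncomputable def newt (c : K) : ℕ → K
  | 0 => 1
  | n + 1 => if (newt c n) ^ 2 = c then newt c n else (newt c n + c / newt c n) / 2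

open Classical in
private lemma newt_succ (c : K) (n : ℕ) : newt c (n + 1)
    = if (newt c n) ^ 2 = c then newt c n else (newt c n + c / newt c n) / 2 := rfl

private lemma newt_zero (c : K) : newt c 0 = 1 := rfl

section Sqrt

variable (V : DVal K) (h2 : (2 : K) ≠ 0) (hv2 : V.ν 2 = 0) (c : K) (hc : Ok V 1 (c - 1))

include h2 hv2 hc

private lemma newt_inv : ∀ n : ℕ, Ok V 1 (newt c n - 1) ∧
    Ok V ((n : ℤ) + 1) ((newt c n) ^ 2 - c) := by
  intro n
  induction n with
  | zero =>
    refine ⟨Or.inl (by rw [newt_zero]; ring), ?_⟩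
    show Ok V ((0 : ℤ) + 1) ((1 : K) ^ 2 - c)
    have h : (1 : K) ^ 2 - c = -(c - 1) := by ring
    rw [h, zero_add]
    exact ok_neg hc
  | succ n ih =>
    obtain ⟨ih1, ih2⟩ := ih
    have hu := nu_one_add V (e := newt c n - 1) ih1
    rw [add_sub_cancel] at hu
    obtain ⟨hg0, hgv⟩ := hu
    rw [newt_succ]
    by_cases hsq : (newt c n) ^ 2 = c
    · rw [if_pos hsq]
      exact ⟨ih1, Or.inl (by rw [hsq]; ring)⟩
    · rw [if_neg hsq]
      have hg2c : (newt c n) ^ 2 - c ≠ 0 := sub_ne_zero.mpr hsq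
      have hnum : (n : ℤ) + 1 ≤ V.ν ((newt c n) ^ 2 - c) := ih2.resolve_left hg2c
      have h2g : (2 : K) * newt c n ≠ 0 := mul_ne_zero h2 hg0
      have hv2g : V.ν (2 * newt c n) = 0 := by
        rw [V.ν_mul 2 (newt c n) h2 hg0, hv2, hgv]
        ring
      have hqne : ((newt c n) ^ 2 - c) / (2 * newt c n) ≠ 0 := div_ne_zero hg2c h2g
      have hqv : V.ν (((newt c n) ^ 2 - c) / (2 * newt c n)) = V.ν ((newt c n) ^ 2 - c) := by
        rw [nu_div V hg2c h2g, hv2g]; ring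
      have hdiff : (newt c n + c / newt c n) / 2 - newt c n
          = -(((newt c n) ^ 2 - c) / (2 * newt c n)) := by
        field_simp
        ring
      have hdok : Ok V ((n : ℤ) + 1) ((newt c n + c / newt c n) / 2 - newt c n) :=
        Or.inr (by rw [hdiff, nu_neg V hqne, hqv]; exact hnum)
      constructor
      · have h : (newt c n + c / newt c n) / 2 - 1
            = ((newt c n + c / newt c n) / 2 - newt c n) + (newt c n - 1) := by ring
        rw [h]
        exact ok_add (ok_mono (by omega) hdok) ih1
      · have hsq2 : ((newt c n + c / newt c n) / 2) ^ 2 - c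
            = (((newt c n) ^ 2 - c) / (2 * newt c n)) ^ 2 := by
          field_simp
          ring
        refine Or.inr ?_
        rw [hsq2, nu_sq V hqne, hqv]
        push_cast
        omega

private lemma newt_step : ∀ n : ℕ, Ok V ((n : ℤ) + 1) (newt c (n + 1) - newt c n) := by
  intro n
  obtain ⟨ih1, ih2⟩ := newt_inv V h2 hv2 c hc n
  have hu := nu_one_add V (e := newt c n - 1) ih1
  rw [add_sub_cancel] at hu
  obtain ⟨hg0, hgv⟩ := hu
  rw [newt_succ]
  by_cases hsq : (newt c n) ^ 2 = c
  · rw [if_pos hsq]; exact Or.inl (sub_self _)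
  · rw [if_neg hsq]
    have hg2c : (newt c n) ^ 2 - c ≠ 0 := sub_ne_zero.mpr hsq
    have hnum : (n : ℤ) + 1 ≤ V.ν ((newt c n) ^ 2 - c) := ih2.resolve_left hg2c
    have h2g : (2 : K) * newt c n ≠ 0 := mul_ne_zero h2 hg0
    have hv2g : V.ν (2 * newt c n) = 0 := by
      rw [V.ν_mul 2 (newt c n) h2 hg0, hv2, hgv]
      ring
    have hqne : ((newt c n) ^ 2 - c) / (2 * newt c n) ≠ 0 := div_ne_zero hg2c h2g
    have hqv : V.ν (((newt c n) ^ 2 - c) / (2 * newt c n)) = V.ν ((newt c n) ^ 2 - c) := by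
      rw [nu_div V hg2c h2g, hv2g]; ring
    have hdiff : (newt c n + c / newt c n) / 2 - newt c n
        = -(((newt c n) ^ 2 - c) / (2 * newt c n)) := by
      field_simp
      ring
    exact Or.inr (by rw [hdiff, nu_neg V hqne, hqv]; exact hnum)

private lemma newt_tele : ∀ m n : ℕ, m ≤ n → Ok V ((m : ℤ) + 1) (newt c n - newt c m) := by
  intro m n hmn
  induction n with
  | zero =>
    have : m = 0 := Nat.le_zero.mp hmn
    subst this
    exact Or.inl (sub_self _)
  | succ n ih =>
    rcases Nat.lt_or_ge m (n + 1) with h | h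
    · have hmn' : m ≤ n := Nat.lt_succ_iff.mp h
      have h1 := ih hmn'
      have h2' := newt_step V h2 hv2 c hc n
      have h : newt c (n + 1) - newt c m
          = (newt c (n + 1) - newt c n) + (newt c n - newt c m) := by ring
      rw [h]
      exact ok_add (ok_mono (by exact_mod_cast by omega) h2') h1
    · have : m = n + 1 := le_antisymm hmn h
      subst this
      exact Or.inl (sub_self _)

/-- Hensel: units `≡ 1 (mod m)` have square roots `≡ 1 (mod m)`. -/
lemma exists_sqrt (hcomp : V.IsComplete) :
    ∃ r : K, r ^ 2 = c ∧ Ok V 1 (r - 1) := by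
  -- Cauchy
  have hcauchy : ∀ M : ℤ, ∃ N : ℕ, ∀ m n : ℕ, N ≤ m → N ≤ n →
      newt c m - newt c n = 0 ∨ M ≤ V.ν (newt c m - newt c n) := by
    intro M
    refine ⟨M.toNat, fun m n hm hn => ?_⟩
    have hM : M ≤ (M.toNat : ℤ) := Int.self_le_toNat M
    rcases Nat.le_total m n with h | h
    · have := newt_tele V h2 hv2 c hc m n h
      have h' : newt c m - newt c n = -(newt c n - newt c m) := by ring
      rw [h']
      exact ok_mono (by omega) (ok_neg this)
    · exact ok_mono (by omega) (newt_tele V h2 hv2 c hc n m h)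
  obtain ⟨L, hL⟩ := hcomp (newt c) hcauchy
  have hL1 : Ok V 1 (L - 1) := by
    obtain ⟨N, hN⟩ := hL 1
    have h1 := hN N le_rfl
    have h2' := (newt_inv V h2 hv2 c hc N).1
    have h : L - 1 = (newt c N - 1) - (newt c N - L) := by ring
    rw [h]
    exact ok_sub h2' h1
  have hLu := nu_one_add V (e := L - 1) hL1
  rw [add_sub_cancel] at hLu
  obtain ⟨hL0, hLv⟩ := hLu
  refine ⟨L, ?_, hL1⟩
  by_contra hne
  have hLc : L ^ 2 - c ≠ 0 := sub_ne_zero.mpr hne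
  set M : ℤ := V.ν (L ^ 2 - c) + 1 with hM
  obtain ⟨N, hN⟩ := hL M
  set n : ℕ := max N M.toNat with hn
  have hfn := hN n (le_max_left _ _)
  have hinv := (newt_inv V h2 hv2 c hc n).2
  have hinv' : Ok V M ((newt c n) ^ 2 - c) := by
    refine ok_mono ?_ hinv
    have : M ≤ (M.toNat : ℤ) := Int.self_le_toNat M
    have h3 : (M.toNat : ℤ) ≤ (n : ℤ) := by exact_mod_cast le_max_right N M.toNat
    omega
  -- ν of newt c n and of L are 0
  have hfn1 := (newt_inv V h2 hv2 c hc n).1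
  have hfnu := nu_one_add V (e := newt c n - 1) hfn1
  rw [add_sub_cancel] at hfnu
  -- L + newt c n has Ok V 0
  have hsum : Ok V 0 (L + newt c n) := by
    have h : L + newt c n = 2 + ((L - 1) + (newt c n - 1)) := by ring
    rw [h]
    exact ok_add (Or.inr (le_of_eq hv2.symm)) (ok_mono (by omega) (ok_add hL1 hfn1))
  have hdiffM : Ok V M (L ^ 2 - (newt c n) ^ 2) := by
    have h : L ^ 2 - (newt c n) ^ 2 = -((newt c n - L) * (L + newt c n)) := by ring
    rw [h]
    have := ok_mul hfn hsum
    rw [add_zero] at this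
    exact ok_neg this
  have htot : Ok V M (L ^ 2 - c) := by
    have h : L ^ 2 - c = (L ^ 2 - (newt c n) ^ 2) + ((newt c n) ^ 2 - c) := by ring
    rw [h]
    exact ok_add hdiffM hinv'
  rcases htot with h | h
  · exact hLc h
  · omega

end Sqrt

end Stmt9

namespace Stmt9

variable {K : Type} [Field K]

lemma int_ok {V : DVal K} {x : K} (h : V.Int x) : Ok V 0 x := h

lemma ok_sq {V : DVal K} {x : K} (h : Ok V 0 x) : Ok V 0 (x ^ 2) := by
  have := ok_mul h h
  rw [add_zero, ← sq] at this
  exact this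

/-- If `d² = a` then the norm form of `ℍ[K,a,ϖ]` is isotropic. -/
lemma not_square {a ϖ : K} (haniso : QAniso a ϖ) {d : K} (hd : d ^ 2 = a) : False := by
  have h := haniso d 1 0 0 (by rw [← hd]; ring)
  exact one_ne_zero h.2.1

/-- In a quaternion division algebra over `K` with `a` a unit, the "norm" `β² - aγ²`
of a nonzero element of `K(x)` is nonzero of even valuation. -/
lemma norm_even (V : DVal K) (hcomp : V.IsComplete) (h2 : (2 : K) ≠ 0) (hv2 : V.ν 2 = 0)
    (a ϖ : K) (ha0 : a ≠ 0) (hva : V.ν a = 0) (haniso : QAniso a ϖ)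
    (β γ : K) (h : ¬(β = 0 ∧ γ = 0)) :
    β ^ 2 - a * γ ^ 2 ≠ 0 ∧ ∃ m : ℤ, V.ν (β ^ 2 - a * γ ^ 2) = 2 * m := by
  have hne : β ^ 2 - a * γ ^ 2 ≠ 0 := by
    intro h0
    have h1 := haniso β γ 0 0 (by linear_combination h0)
    exact h ⟨h1.1, h1.2.1⟩
  refine ⟨hne, ?_⟩
  by_cases hβ0 : β = 0
  · have hγ0 : γ ≠ 0 := fun hg => h ⟨hβ0, hg⟩
    refine ⟨V.ν γ, ?_⟩
    subst hβ0
    have he : (0 : K) ^ 2 - a * γ ^ 2 = -(a * γ ^ 2) := by ring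
    rw [he, nu_neg V (mul_ne_zero ha0 (pow_ne_zero 2 hγ0)),
      V.ν_mul a (γ ^ 2) ha0 (pow_ne_zero 2 hγ0), hva, nu_sq V hγ0]
    ring
  by_cases hγ0 : γ = 0
  · refine ⟨V.ν β, ?_⟩
    subst hγ0
    have he : β ^ 2 - a * 0 ^ 2 = β ^ 2 := by ring
    rw [he, nu_sq V hβ0]
  -- both nonzero
  have hA : V.ν (β ^ 2) = 2 * V.ν β := nu_sq V hβ0
  have hBne : a * γ ^ 2 ≠ 0 := mul_ne_zero ha0 (pow_ne_zero 2 hγ0)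
  have hB : V.ν (-(a * γ ^ 2)) = 2 * V.ν γ := by
    rw [nu_neg V hBne, V.ν_mul a (γ ^ 2) ha0 (pow_ne_zero 2 hγ0), hva, nu_sq V hγ0]
    ring
  have hsum : β ^ 2 - a * γ ^ 2 = β ^ 2 + -(a * γ ^ 2) := by ring
  rcases lt_trichotomy (V.ν β) (V.ν γ) with hlt | heq | hgt
  · refine ⟨V.ν β, ?_⟩
    have := nu_add_lt V (pow_ne_zero 2 hβ0) (neg_ne_zero.2 hBne) (by omega)
    rw [← hsum] at this
    rw [this.2, hA]
  · -- equal valuations: Hensel forces the valuation to be `2 ν β`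
    refine ⟨V.ν β, ?_⟩
    by_contra hcon
    have hge : 2 * V.ν β ≤ V.ν (β ^ 2 - a * γ ^ 2) := by
      have := V.ν_add (β ^ 2) (-(a * γ ^ 2)) (pow_ne_zero 2 hβ0) (neg_ne_zero.2 hBne)
        (by rw [← hsum]; exact hne)
      rw [← hsum] at this
      omega
    have hge1 : 2 * V.ν β + 1 ≤ V.ν (β ^ 2 - a * γ ^ 2) := by
      rcases lt_or_eq_of_le hge with h' | h'
      · omega
      · exact absurd h'.symm hcon
    -- c := a γ² / β²
    set c : K := a * γ ^ 2 / β ^ 2 with hc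
    have hcm1 : c - 1 = -((β ^ 2 - a * γ ^ 2) / β ^ 2) := by
      rw [hc]
      field_simp
      ring
    have hfrac0 : (β ^ 2 - a * γ ^ 2) / β ^ 2 ≠ 0 := div_ne_zero hne (pow_ne_zero 2 hβ0)
    have hOk : Ok V 1 (c - 1) := by
      right
      rw [hcm1, nu_neg V hfrac0, nu_div V hne (pow_ne_zero 2 hβ0), nu_sq V hβ0]
      omega
    obtain ⟨r, hr2, _⟩ := exists_sqrt V h2 hv2 c hOk hcomp
    have hr2' : r ^ 2 * β ^ 2 = a * γ ^ 2 := by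
      rw [hr2, hc]
      field_simp
    exact not_square haniso (d := r * β / γ) (by field_simp; linear_combination hr2')
  · refine ⟨V.ν γ, ?_⟩
    have := nu_add_lt V (neg_ne_zero.2 hBne) (pow_ne_zero 2 hβ0) (by omega)
    have hsum' : β ^ 2 - a * γ ^ 2 = -(a * γ ^ 2) + β ^ 2 := by ring
    rw [← hsum'] at this
    rw [this.2, hB]

end Stmt9


open Stmt9

/-- if `u = δ + βy + γz` is symmetric of value `1/2` for `σ = τ_x` then `β + γx`
is a unit of the ring of integers of `K(x)` (i.e. `ν_K(β² - aγ²) = 0`) and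
`⟨u⟩ ≅ ⟨βy + γz⟩` over `(D, τ_x)`. -/
theorem stmt_9 (K : Type) [Field K] (V : DVal K)
    -- K is complete with residue field of characteristic ≠ 2
    (hcomp : V.IsComplete) (hchar : V.ResCharNeTwo)
    -- D = ℍ[K,a,ϖ] with a ∈ O_K^×, ϖ a uniformizer, D a division ring
    (a ϖ : K) (ha0 : a ≠ 0) (hva : V.ν a = 0) (hϖ0 : ϖ ≠ 0) (hvϖ : V.ν ϖ = 1)
    (haniso : QAniso a ϖ)
    -- σ = τ_x (μ = λ⁻¹)
    (mu : QuaternionAlgebra K a 0 ϖ)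
    (hmu : (⟨0, 1, 0, 0⟩ : QuaternionAlgebra K a 0 ϖ) * mu = 1) (hmu' : mu * (⟨0, 1, 0, 0⟩ : QuaternionAlgebra K a 0 ϖ) = 1)
    (σ : QuaternionAlgebra K a 0 ϖ → QuaternionAlgebra K a 0 ϖ)
    (hσ : ∀ u, σ u = (⟨0, 1, 0, 0⟩ : QuaternionAlgebra K a 0 ϖ) * qtau u * mu)
    -- u = δ + βy + γz with coordinates in O_K and ν_D(u) = 1/2
    (δ β γ : K) (hδ : V.Int δ) (hβ : V.Int β) (hγ : V.Int γ)
    (hu0 : (⟨δ, 0, β, γ⟩ : QuaternionAlgebra K a 0 ϖ) ≠ 0)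
    (hval : qnu V a ϖ (⟨δ, 0, β, γ⟩ : QuaternionAlgebra K a 0 ϖ) = 1 / 2) :
    V.IntUnit (β ^ 2 - a * γ ^ 2) ∧ ∃ t : QuaternionAlgebra K a 0 ϖ, IsUnit t ∧
      (⟨δ, 0, β, γ⟩ : QuaternionAlgebra K a 0 ϖ) =
        σ t * (⟨0, 0, β, γ⟩ : QuaternionAlgebra K a 0 ϖ) * t := by
  obtain ⟨h2K, hv2⟩ := hchar
  -- value of the reduced norm
  have hq : V.ν (δ ^ 2 - ϖ * (β ^ 2 - a * γ ^ 2)) = 1 := by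
    have h1 : qnrd a ϖ (⟨δ, 0, β, γ⟩ : QuaternionAlgebra K a 0 ϖ)
        = δ ^ 2 - ϖ * (β ^ 2 - a * γ ^ 2) := by
      show δ ^ 2 - a * 0 ^ 2 - ϖ * β ^ 2 + a * ϖ * γ ^ 2 = _
      ring
    unfold qnu at hval
    rw [h1] at hval
    have h2' : (V.ν (δ ^ 2 - ϖ * (β ^ 2 - a * γ ^ 2)) : ℚ) = 1 := by
      field_simp at hval
      exact_mod_cast hval
    exact_mod_cast h2'
  have hβγ : ¬(β = 0 ∧ γ = 0) := by
    rintro ⟨hb, hg⟩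
    subst hb; subst hg
    have hδ0 : δ ≠ 0 := by
      intro h0; subst h0
      exact hu0 rfl
    have he : δ ^ 2 - ϖ * ((0 : K) ^ 2 - a * 0 ^ 2) = δ ^ 2 := by ring
    rw [he, nu_sq V hδ0] at hq
    omega
  obtain ⟨hE0, m, hEm⟩ := norm_even V hcomp h2K hv2 a ϖ ha0 hva haniso β γ hβγ
  have okE : Ok V 0 (β ^ 2 - a * γ ^ 2) := by
    refine ok_sub (ok_sq (int_ok hβ)) ?_
    have := ok_mul (Or.inr (le_of_eq hva.symm) : Ok V 0 a) (ok_sq (int_ok hγ))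
    rwa [add_zero] at this
  have hEge : 0 ≤ V.ν (β ^ 2 - a * γ ^ 2) := okE.resolve_left hE0
  have hϖE : ϖ * (β ^ 2 - a * γ ^ 2) ≠ 0 := mul_ne_zero hϖ0 hE0
  have hvϖE : V.ν (ϖ * (β ^ 2 - a * γ ^ 2)) = 1 + 2 * m := by
    rw [V.ν_mul ϖ _ hϖ0 hE0, hvϖ, hEm]
  have hkey : V.ν (β ^ 2 - a * γ ^ 2) = 0 ∧ (δ = 0 ∨ 1 ≤ V.ν δ) := by
    by_cases hδ0 : δ = 0
    · subst hδ0
      have he : (0 : K) ^ 2 - ϖ * (β ^ 2 - a * γ ^ 2) = -(ϖ * (β ^ 2 - a * γ ^ 2)) := by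
        ring
      rw [he, nu_neg V hϖE, hvϖE] at hq
      exact ⟨by omega, Or.inl rfl⟩
    · have hδge : 0 ≤ V.ν δ := hδ.resolve_left hδ0
      have hA : V.ν (δ ^ 2) = 2 * V.ν δ := nu_sq V hδ0
      have hsum : δ ^ 2 - ϖ * (β ^ 2 - a * γ ^ 2)
          = δ ^ 2 + -(ϖ * (β ^ 2 - a * γ ^ 2)) := by ring
      have hB : V.ν (-(ϖ * (β ^ 2 - a * γ ^ 2))) = 1 + 2 * m := by
        rw [nu_neg V hϖE, hvϖE]
      rcases lt_trichotomy (V.ν (δ ^ 2)) (V.ν (-(ϖ * (β ^ 2 - a * γ ^ 2)))) with hlt | heqv | hgt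
      · exfalso
        have := nu_add_lt V (pow_ne_zero 2 hδ0) (neg_ne_zero.2 hϖE) hlt
        rw [← hsum] at this
        omega
      · exfalso; omega
      · have := nu_add_lt V (neg_ne_zero.2 hϖE) (pow_ne_zero 2 hδ0) hgt
        have hsum' : -(ϖ * (β ^ 2 - a * γ ^ 2)) + δ ^ 2
            = δ ^ 2 - ϖ * (β ^ 2 - a * γ ^ 2) := by ring
        rw [hsum'] at this
        exact ⟨by omega, Or.inr (by omega)⟩
  refine ⟨⟨hE0, hkey.1⟩, ?_⟩
  -- compute μ and σ on quaternions with no x-component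
  have hxw : (⟨0, 1, 0, 0⟩ : QuaternionAlgebra K a 0 ϖ) * ⟨0, a⁻¹, 0, 0⟩ = 1 := by
    ext <;> simp <;> field_simp
  have hmueq : mu = (⟨0, a⁻¹, 0, 0⟩ : QuaternionAlgebra K a 0 ϖ) := by
    have h1 : mu * ((⟨0, 1, 0, 0⟩ : QuaternionAlgebra K a 0 ϖ) * ⟨0, a⁻¹, 0, 0⟩) = mu := by
      rw [hxw, mul_one]
    rw [← mul_assoc, hmu', one_mul] at h1
    exact h1.symm
  have hσmk : ∀ p w1 w2 : K, σ (⟨p, 0, w1, w2⟩ : QuaternionAlgebra K a 0 ϖ)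
      = ⟨p, 0, w1, w2⟩ := by
    intro p w1 w2
    rw [hσ, hmueq]
    show (⟨0, 1, 0, 0⟩ : QuaternionAlgebra K a 0 ϖ) * ⟨p, -0, -w1, -w2⟩ * ⟨0, a⁻¹, 0, 0⟩ = _
    ext <;> simp <;> field_simp
  by_cases hδ0 : δ = 0
  · subst hδ0
    refine ⟨1, isUnit_one, ?_⟩
    have h1 : (1 : QuaternionAlgebra K a 0 ϖ) = ⟨1, 0, 0, 0⟩ := rfl
    rw [h1, hσmk, ← h1, one_mul, mul_one]
  · have hδ1 : 1 ≤ V.ν δ := hkey.2.resolve_left hδ0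
    obtain ⟨N, hNd⟩ : ∃ N : K, N = ϖ * (β ^ 2 - a * γ ^ 2) := ⟨_, rfl⟩
    have hN0 : N ≠ 0 := by rw [hNd]; exact hϖE
    have hvN : V.ν N = 1 := by
      rw [hNd, V.ν_mul ϖ _ hϖ0 hE0, hvϖ, hkey.1]
      omega
    have hδsq0 : δ ^ 2 ≠ 0 := pow_ne_zero 2 hδ0
    have hδ2N : δ ^ 2 / N ≠ 0 := div_ne_zero hδsq0 hN0
    have hOk1 : Ok V 1 ((1 - δ ^ 2 / N) - 1) := by
      right
      have he : (1 - δ ^ 2 / N) - 1 = -(δ ^ 2 / N) := by ring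
      rw [he, nu_neg V hδ2N, nu_div V hδsq0 hN0, nu_sq V hδ0, hvN]
      omega
    obtain ⟨r, hr2, hr1⟩ := exists_sqrt V h2K hv2 (1 - δ ^ 2 / N) hOk1 hcomp
    have hru : r ≠ 0 ∧ V.ν r = 0 := by
      have := nu_one_add V hr1
      rwa [add_sub_cancel] at this
    have h1r : 1 + r ≠ 0 ∧ V.ν (1 + r) = 0 := by
      rcases eq_or_ne (r - 1) 0 with h0 | h0
      · have hr1' : r = 1 := by linear_combination h0
        subst hr1'
        refine ⟨?_, ?_⟩
        · intro hh; exact h2K (by linear_combination hh)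
        · have he : (1 : K) + 1 = 2 := by norm_num
          rw [he, hv2]
      · have hlt : V.ν (2 : K) < V.ν (r - 1) := by
          rw [hv2]; exact lt_of_lt_of_le one_pos (hr1.resolve_left h0)
        have hthis := nu_add_lt V h2K h0 hlt
        have he : (2 : K) + (r - 1) = 1 + r := by ring
        rw [he, hv2] at hthis
        exact hthis
    obtain ⟨s, hs⟩ : ∃ s : K, s = (1 + r) / 2 := ⟨_, rfl⟩
    have hs0 : s ≠ 0 := by rw [hs]; exact div_ne_zero h1r.1 h2K
    have hOks : Ok V 1 (s - 1) := by
      have he : s - 1 = (r - 1) / 2 := by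
        rw [hs]
        field_simp
        ring
      rcases eq_or_ne (r - 1) 0 with h0 | h0
      · left; rw [he, h0, zero_div]
      · right
        rw [he, nu_div V h0 h2K, hv2]
        have := hr1.resolve_left h0
        omega
    obtain ⟨p, hp2, hp1⟩ := exists_sqrt V h2K hv2 s hOks hcomp
    have hpu : p ≠ 0 ∧ V.ν p = 0 := by
      have := nu_one_add V hp1
      rwa [add_sub_cancel] at this
    obtain ⟨q, hqd⟩ : ∃ q : K, q = δ / (2 * N * p) := ⟨_, rfl⟩
    have h2Np : 2 * N * p ≠ 0 := mul_ne_zero (mul_ne_zero h2K hN0) hpu.1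
    have key1 : 2 * p * q * N = δ := by
      rw [hqd]; field_simp [h2K, hN0, hpu.1]
    have hp2' : p ^ 2 = (1 + r) / 2 := by rw [hp2, hs]
    have hδ2 : δ ^ 2 = N * (1 - r ^ 2) := by
      rw [hr2]; field_simp [hN0]; ring
    have e1 : 4 * p ^ 2 * q ^ 2 * N ^ 2 = N * (1 - r ^ 2) := by
      rw [← hδ2]; linear_combination (2 * p * q * N + δ) * key1
    have hp2'' : 2 * p ^ 2 = 1 + r := by
      rw [hp2']
      field_simp
    have e2' : (2 * (N * q ^ 2)) * (N * (1 + r)) = (1 - r) * (N * (1 + r)) := by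
      linear_combination e1 - (2 * N ^ 2 * q ^ 2) * hp2''
    have e2'' := mul_right_cancel₀ (mul_ne_zero hN0 h1r.1) e2'
    have key2 : p ^ 2 + N * q ^ 2 = 1 := by
      have h : 2 * (p ^ 2 + N * q ^ 2) = 2 * 1 := by linear_combination hp2'' + e2''
      exact mul_left_cancel₀ h2K h
    have keyw : p ^ 2 - N * q ^ 2 = r := by
      have h : 2 * (p ^ 2 - N * q ^ 2) = 2 * r := by linear_combination hp2'' - e2''
      exact mul_left_cancel₀ h2K h
    have hNE : N = ϖ * (β ^ 2 - a * γ ^ 2) := hNd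
    have keyw' : p ^ 2 - ϖ * (q * β) ^ 2 + a * ϖ * (q * γ) ^ 2 = r := by
      linear_combination keyw + q ^ 2 * hNE
    have hr0 : r ≠ 0 := hru.1
    refine ⟨⟨p, 0, q * β, q * γ⟩, ?_, ?_⟩
    · refine ⟨⟨⟨p, 0, q * β, q * γ⟩, ⟨p / r, 0, -(q * β) / r, -(q * γ) / r⟩, ?_, ?_⟩, rfl⟩
      · ext
        · show p * (p / r) + a * 0 * 0 + ϖ * (q * β) * (-(q * β) / r)
              + 0 * ϖ * (q * β) * (-(q * γ) / r) - a * ϖ * (q * γ) * (-(q * γ) / r) = 1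
          field_simp
          linear_combination keyw'
        · show p * 0 + 0 * (p / r) + 0 * 0 * 0 - ϖ * (q * β) * (-(q * γ) / r)
              + ϖ * (q * γ) * (-(q * β) / r) = 0
          field_simp
          try ring
        · show p * (-(q * β) / r) + a * 0 * (-(q * γ) / r) + (q * β) * (p / r)
              + 0 * (q * β) * 0 - a * (q * γ) * 0 = 0
          field_simp
          try ring
        · show p * (-(q * γ) / r) + 0 * (-(q * β) / r) + 0 * 0 * (-(q * γ) / r) - (q * β) * 0
              + (q * γ) * (p / r) = 0
          field_simp
          try ring
      · ext
        · show (p / r) * p + a * 0 * 0 + ϖ * (-(q * β) / r) * (q * β)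
              + 0 * ϖ * (-(q * β) / r) * (q * γ) - a * ϖ * (-(q * γ) / r) * (q * γ) = 1
          field_simp
          linear_combination keyw'
        · show (p / r) * 0 + 0 * p + 0 * 0 * 0 - ϖ * (-(q * β) / r) * (q * γ)
              + ϖ * (-(q * γ) / r) * (q * β) = 0
          field_simp
          try ring
        · show (p / r) * (q * β) + a * 0 * (q * γ) + (-(q * β) / r) * p
              + 0 * (-(q * β) / r) * 0 - a * (-(q * γ) / r) * 0 = 0
          field_simp
          try ring
        · show (p / r) * (q * γ) + 0 * (q * β) + 0 * 0 * (q * γ) - (-(q * β) / r) * 0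
              + (-(q * γ) / r) * p = 0
          field_simp
          try ring
    · rw [hσmk]
      ext
      · show δ = _
        simp only [QuaternionAlgebra.mk_mul_mk]
        linear_combination (-1 : K) * key1 + 2 * p * q * hNE
      · show (0 : K) = _
        simp only [QuaternionAlgebra.mk_mul_mk]
        ring
      · show β = _
        simp only [QuaternionAlgebra.mk_mul_mk]
        linear_combination (-β) * key2 + q ^ 2 * β * hNE
      · show γ = _
        simp only [QuaternionAlgebra.mk_mul_mk]
        linear_combination (-γ) * key2 + q ^ 2 * γ * hNE
end
end

section
/- Let σ = τ_y and let u = δ + αx + γz with δ, α, γ ∈ O_K and ν_D(u) = 1/2 (note σ(u) = u, so u is a symmetric element of value 1/2). Then γ ∈ O_K^× and there exists an invertible t ∈ D with u = σ(t)·(γz)·t; that is, ⟨u⟩ ≅ ⟨γz⟩ as hermitian forms over (D, τ_y). -/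
noncomputable section

namespace DVal

variable {K : Type} [Field K] (V : DVal K)

open Classical in
/-- Extended valuation with `w 0 = ⊤`. -/
def w (x : K) : WithTop ℤ := if x = 0 then ⊤ else (V.ν x : WithTop ℤ)

theorem w_zero : V.w 0 = ⊤ := if_pos rfl

theorem w_of_ne {x : K} (hx : x ≠ 0) : V.w x = (V.ν x : WithTop ℤ) := if_neg hx

theorem w_eq_top {x : K} : V.w x = ⊤ ↔ x = 0 := by
  constructor
  · intro h
    by_contra hx
    rw [w_of_ne V hx] at h
    exact WithTop.coe_ne_top h
  · intro h; rw [h]; exact V.w_zero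

theorem w_one : V.w 1 = 0 := by
  rw [w_of_ne V one_ne_zero, V.ν_one]; rfl

theorem w_mul (x y : K) : V.w (x * y) = V.w x + V.w y := by
  by_cases hx : x = 0
  · simp [hx, w_zero]
  by_cases hy : y = 0
  · simp [hy, w_zero]
  rw [w_of_ne V (mul_ne_zero hx hy), w_of_ne V hx, w_of_ne V hy, V.ν_mul x y hx hy]
  exact_mod_cast rfl

theorem w_neg (x : K) : V.w (-x) = V.w x := by
  by_cases hx : x = 0
  · simp [hx]
  have h1 : ((-1 : K)) * (-1 : K) = 1 := by ring
  have hν : V.ν (-1 : K) = 0 := by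
    have := V.ν_mul (-1) (-1) (by norm_num) (by norm_num)
    rw [h1, V.ν_one] at this
    omega
  have : V.w ((-1 : K) * x) = V.w (-1 : K) + V.w x := V.w_mul _ _
  rw [neg_one_mul] at this
  rw [this, w_of_ne V (by norm_num : (-1:K) ≠ 0), hν]
  simp

theorem w_add (x y : K) : min (V.w x) (V.w y) ≤ V.w (x + y) := by
  by_cases hx : x = 0
  · simp only [hx, zero_add]; exact min_le_right _ _
  by_cases hy : y = 0
  · simp only [hy, add_zero]; exact min_le_left _ _
  by_cases hxy : x + y = 0
  · simp [hxy, w_zero]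
  rw [w_of_ne V hx, w_of_ne V hy, w_of_ne V hxy]
  have := V.ν_add x y hx hy hxy
  rw [← WithTop.coe_min]
  exact_mod_cast this

theorem w_sub (x y : K) : min (V.w x) (V.w y) ≤ V.w (x - y) := by
  have := V.w_add x (-y)
  rwa [V.w_neg y, ← sub_eq_add_neg] at this

theorem w_add_eq_left {x y : K} (h : V.w x < V.w y) : V.w (x + y) = V.w x := by
  refine le_antisymm ?_ ?_
  · have h2 : V.w x = V.w ((x + y) + (-y)) := by ring_nf
    have := V.w_add (x + y) (-y)
    rw [V.w_neg] at this
    rw [h2] at h ⊢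
    by_contra hlt
    push_neg at hlt
    have : min (V.w (x+y)) (V.w y) ≤ V.w (x + y + -y) := this
    rcases min_le_iff.mp this with h3 | h3
    · exact absurd (lt_of_lt_of_le hlt h3) (lt_irrefl _)
    · exact absurd (lt_of_lt_of_le h h3) (lt_irrefl _)
  · have := V.w_add x y
    rwa [min_eq_left h.le] at this

theorem w_inv {x : K} (hx : x ≠ 0) : V.w x⁻¹ = - V.ν x := by
  have h := V.w_mul x x⁻¹
  rw [mul_inv_cancel₀ hx, V.w_one, w_of_ne V hx, w_of_ne V (inv_ne_zero hx)] at h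
  have : V.ν x + V.ν x⁻¹ = 0 := by exact_mod_cast h.symm
  rw [w_of_ne V (inv_ne_zero hx)]
  exact_mod_cast (by omega : V.ν x⁻¹ = - V.ν x)

theorem eq_zero_of_w {x : K} (h : ∀ M : ℤ, (M : WithTop ℤ) ≤ V.w x) : x = 0 := by
  by_contra hx
  have := h (V.ν x + 1)
  rw [w_of_ne V hx] at this
  have : V.ν x + 1 ≤ V.ν x := by exact_mod_cast this
  omega

theorem le_w_iff {x : K} {M : ℤ} : (M : WithTop ℤ) ≤ V.w x ↔ x = 0 ∨ M ≤ V.ν x := by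
  by_cases hx : x = 0
  · simp [hx, w_zero, le_top]
  · rw [w_of_ne V hx]
    constructor
    · intro h; exact Or.inr (by exact_mod_cast h)
    · rintro (h | h); · exact absurd h hx
      exact_mod_cast h

/-- Hensel's lemma for square roots of elements `≡ 1 (mod m)`. -/
theorem sqrt_exists (hcomp : V.IsComplete) (hchar : V.ResCharNeTwo) (c : K)
    (hc : 1 ≤ V.w (c - 1)) : ∃ s : K, s * s = c ∧ 1 ≤ V.w (s - 1) := by
  obtain ⟨h2, hν2⟩ := hchar
  have w2 : V.w 2 = 0 := by rw [w_of_ne V h2, hν2]; rfl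
  -- Newton iteration
  set f : ℕ → K := fun n => Nat.rec (1 : K) (fun _ s => (s + c / s) / 2) n with hf
  have hf0 : f 0 = 1 := rfl
  have hfs : ∀ n, f (n + 1) = (f n + c / f n) / 2 := fun n => rfl
  -- invariant
  have key : ∀ n : ℕ, 1 ≤ V.w (f n - 1) ∧ ((n : ℤ) + 1 : WithTop ℤ) ≤ V.w (f n * f n - c) := by
    intro n
    induction n with
    | zero =>
      constructor
      · simp [hf0, w_zero]
      · rw [hf0, show (1 : K) * 1 - c = -(c - 1) by ring, V.w_neg]
        simpa using hc
    | succ n ih =>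
      obtain ⟨ih1, ih2⟩ := ih
      have hfn0 : V.w (f n) = 0 := by
        have : V.w 1 < V.w (f n - 1) := by rw [V.w_one]; exact lt_of_lt_of_le (by norm_num) ih1
        have h := V.w_add_eq_left this
        rw [show (1 : K) + (f n - 1) = f n by ring] at h
        rw [h, V.w_one]
      have hfn : f n ≠ 0 := by
        intro h0; rw [h0, w_zero] at hfn0; exact absurd hfn0 (by simp)
      have step : f (n+1) - f n = (c - f n * f n) / (2 * f n) := by
        rw [hfs]; field_simp; ring
      have wstep : ((n : ℤ) + 1 : WithTop ℤ) ≤ V.w (f (n+1) - f n) := by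
        rw [step, div_eq_mul_inv, V.w_mul, V.w_inv (mul_ne_zero h2 hfn)]
        have hw2fn : V.ν (2 * f n) = 0 := by
          have := V.ν_mul 2 (f n) h2 hfn
          have hfn' : V.ν (f n) = 0 := by
            have := V.w_of_ne hfn; rw [hfn0] at this
            exact_mod_cast this.symm
          rw [this, hν2, hfn']; ring
        rw [hw2fn]
        have : V.w (c - f n * f n) = V.w (f n * f n - c) := by
          rw [show c - f n * f n = -(f n * f n - c) by ring, V.w_neg]
        rw [this]
        simpa using ih2
      constructor
      · have : min (V.w (f (n+1) - f n)) (V.w (f n - 1)) ≤ V.w (f (n+1) - 1) := by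
          have := V.w_add (f (n+1) - f n) (f n - 1)
          rwa [show f (n+1) - f n + (f n - 1) = f (n+1) - 1 by ring] at this
        refine le_trans (le_min ?_ ih1) this
        refine le_trans ?_ wstep
        exact_mod_cast (by omega : (1:ℤ) ≤ (n:ℤ)+1)
      · have h4 : (4 : K) = 2 * 2 := by norm_num
        have h40 : (4 : K) ≠ 0 := by rw [h4]; exact mul_ne_zero h2 h2
        have hsq : f (n+1) * f (n+1) - c = (f n * f n - c) * (f n * f n - c) / (4 * (f n * f n)) := by
          rw [hfs]; field_simp; ring
        have hν4fn : V.ν (4 * (f n * f n)) = 0 := by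
          have hfn' : V.ν (f n) = 0 := by
            have := V.w_of_ne hfn; rw [hfn0] at this
            exact_mod_cast this.symm
          have e1 := V.ν_mul (f n) (f n) hfn hfn
          have e2 := V.ν_mul 4 (f n * f n) h40 (mul_ne_zero hfn hfn)
          have e3 := V.ν_mul 2 2 h2 h2
          rw [← h4] at e3
          rw [e2, e1, e3, hν2, hfn']; ring
        rw [hsq, div_eq_mul_inv, V.w_mul, V.w_inv (mul_ne_zero h40 (mul_ne_zero hfn hfn)), hν4fn,
          V.w_mul]
        have : ((n : ℤ) + 1 + ((n : ℤ) + 1) : WithTop ℤ) ≤ V.w (f n * f n - c) + V.w (f n * f n - c) :=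
          add_le_add ih2 ih2
        rw [show (-(↑(0:ℤ)) : WithTop ℤ) = 0 by simp, add_zero]
        refine le_trans ?_ this
        rw [show ((n:ℤ) + 1 + ((n:ℤ)+1) : WithTop ℤ) = (((n:ℤ)+1+((n:ℤ)+1) : ℤ) : WithTop ℤ) by push_cast; ring]
        exact_mod_cast (by omega : (((n+1):ℕ):ℤ)+1 ≤ (n:ℤ)+1+((n:ℤ)+1))
  -- the sequence f n is Cauchy
  have tele : ∀ n m : ℕ, n ≤ m → ((n : ℤ) + 1 : WithTop ℤ) ≤ V.w (f m - f n) := by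
    intro n m hnm
    induction m with
    | zero =>
      have : n = 0 := Nat.le_zero.mp hnm
      subst this; simp [w_zero]
    | succ m ih =>
      rcases Nat.lt_or_ge n (m+1) with h | h
      · have hn_le : n ≤ m := Nat.lt_succ_iff.mp h
        have h1 := ih hn_le
        have h2' : ((m : ℤ) + 1 : WithTop ℤ) ≤ V.w (f (m+1) - f m) := by
          have := (key m).2
          -- recompute step bound
          by_cases hzero : f (m+1) - f m = 0
          · rw [hzero, w_zero]; exact le_top
          · -- from key, as before
            have hfn0 : V.w (f m) = 0 := by
              have h1' := (key m).1
              have : V.w 1 < V.w (f m - 1) := by rw [V.w_one]; exact lt_of_lt_of_le (by norm_num) h1'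
              have h := V.w_add_eq_left this
              rw [show (1 : K) + (f m - 1) = f m by ring] at h
              rw [h, V.w_one]
            have hfn : f m ≠ 0 := by
              intro h0; rw [h0, w_zero] at hfn0; exact absurd hfn0 (by simp)
            have step : f (m+1) - f m = (c - f m * f m) / (2 * f m) := by
              rw [hfs]; field_simp; ring
            rw [step, div_eq_mul_inv, V.w_mul, V.w_inv (mul_ne_zero h2 hfn)]
            have hw2fn : V.ν (2 * f m) = 0 := by
              have e := V.ν_mul 2 (f m) h2 hfn
              have hfn' : V.ν (f m) = 0 := by
                have := V.w_of_ne hfn; rw [hfn0] at this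
                exact_mod_cast this.symm
              rw [e, hν2, hfn']; ring
            rw [hw2fn]
            have heq : V.w (c - f m * f m) = V.w (f m * f m - c) := by
              rw [show c - f m * f m = -(f m * f m - c) by ring, V.w_neg]
            rw [heq]
            simpa using (key m).2
        have := V.w_add (f (m+1) - f m) (f m - f n)
        rw [show f (m+1) - f m + (f m - f n) = f (m+1) - f n by ring] at this
        refine le_trans (le_min ?_ h1) this
        refine le_trans ?_ h2'
        exact_mod_cast (by omega : ((n:ℤ)+1 : ℤ) ≤ ((m:ℤ)+1 : ℤ))
      · have : n = m + 1 := le_antisymm hnm h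
        subst this; simp [w_zero]
  have cauchy : ∀ M : ℤ, ∃ N : ℕ, ∀ m n : ℕ, N ≤ m → N ≤ n →
      f m - f n = 0 ∨ M ≤ V.ν (f m - f n) := by
    intro M
    refine ⟨M.toNat, fun m n hm hn => ?_⟩
    rw [← V.le_w_iff]
    rcases Nat.le_total n m with h | h
    · refine le_trans ?_ (tele n m h)
      have : M ≤ (n : ℤ) + 1 := by omega
      exact_mod_cast this
    · rw [show f m - f n = -(f n - f m) by ring, V.w_neg]
      refine le_trans ?_ (tele m n h)
      have : M ≤ (m : ℤ) + 1 := by omega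
      exact_mod_cast this
  obtain ⟨L, hL⟩ := hcomp f cauchy
  have hL' : ∀ M : ℤ, ∃ N : ℕ, ∀ n : ℕ, N ≤ n → (M : WithTop ℤ) ≤ V.w (f n - L) := by
    intro M
    obtain ⟨N, hN⟩ := hL M
    exact ⟨N, fun n hn => (V.le_w_iff).mpr (hN n hn)⟩
  refine ⟨L, ?_, ?_⟩
  · -- L * L = c
    apply sub_eq_zero.mp
    apply V.eq_zero_of_w
    intro M
    obtain ⟨N, hN⟩ := hL' M
    set n := max N M.toNat with hn
    have hfL := hN n (le_max_left _ _)
    have hwL : V.w L = 0 := by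
      obtain ⟨N1, hN1⟩ := hL' 1
      have h1 := hN1 N1 le_rfl
      have hfN1 : V.w (f N1) = 0 := by
        have h1' := (key N1).1
        have : V.w 1 < V.w (f N1 - 1) := by rw [V.w_one]; exact lt_of_lt_of_le (by norm_num) h1'
        have h := V.w_add_eq_left this
        rw [show (1 : K) + (f N1 - 1) = f N1 by ring] at h
        rw [h, V.w_one]
      have : V.w L = V.w (f N1 + -(f N1 - L)) := by rw [show f N1 + -(f N1 - L) = L by ring]
      rw [this]
      have hlt : V.w (f N1) < V.w (-(f N1 - L)) := by
        rw [V.w_neg, hfN1]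
        exact lt_of_lt_of_le (by norm_num) h1
      rw [V.w_add_eq_left hlt, hfN1]
    have hsplit : L * L - c = (L - f n) * (L + f n) + (f n * f n - c) := by ring
    rw [hsplit]
    have key2 := (key n).2
    have hfn0 : V.w (f n) = 0 := by
      have h1' := (key n).1
      have : V.w 1 < V.w (f n - 1) := by rw [V.w_one]; exact lt_of_lt_of_le (by norm_num) h1'
      have h := V.w_add_eq_left this
      rw [show (1 : K) + (f n - 1) = f n by ring] at h
      rw [h, V.w_one]
    have hsum : (0 : WithTop ℤ) ≤ V.w (L + f n) := by
      have := V.w_add L (f n)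
      rw [hwL, hfn0] at this
      simpa using this
    have hterm1 : (M : WithTop ℤ) ≤ V.w ((L - f n) * (L + f n)) := by
      rw [V.w_mul]
      have h1 : (M : WithTop ℤ) ≤ V.w (L - f n) := by
        rw [show L - f n = -(f n - L) by ring, V.w_neg]; exact hfL
      calc (M : WithTop ℤ) = M + 0 := by simp
        _ ≤ V.w (L - f n) + V.w (L + f n) := add_le_add h1 hsum
    have hterm2 : (M : WithTop ℤ) ≤ V.w (f n * f n - c) := by
      refine le_trans ?_ key2
      have : M ≤ (n : ℤ) + 1 := by
        have : M.toNat ≤ n := le_max_right _ _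
        omega
      exact_mod_cast this
    have := V.w_add ((L - f n) * (L + f n)) (f n * f n - c)
    exact le_trans (le_min hterm1 hterm2) this
  · -- 1 ≤ w (L - 1)
    obtain ⟨N, hN⟩ := hL' 1
    have h1 := hN N le_rfl
    have h2' := (key N).1
    have := V.w_add (-(f N - L)) (f N - 1)
    rw [show -(f N - L) + (f N - 1) = L - 1 by ring] at this
    refine le_trans (le_min ?_ h2') this
    rw [V.w_neg]; exact h1

end DVal

section Helpers

theorem wt_one_le {v : WithTop ℤ} (h0 : 0 ≤ v) (h1 : v ≠ 0) : 1 ≤ v := by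
  cases v with
  | top => exact le_top
  | coe n =>
    have hn : (0 : ℤ) ≤ n := by exact_mod_cast h0
    have hn' : n ≠ 0 := by
      intro h; apply h1; rw [h]; rfl
    exact_mod_cast (by omega : (1:ℤ) ≤ n)

theorem wt_two_ne_one {m : WithTop ℤ} : m + m ≠ 1 := by
  cases m with
  | top => simp
  | coe n =>
    intro h
    have : n + n = 1 := by exact_mod_cast h
    omega

theorem wt_one_le_half {m : WithTop ℤ} (h : 1 ≤ m + m) : 1 ≤ m := by
  cases m with
  | top => exact le_top
  | coe n =>
    have : (1:ℤ) ≤ n + n := by exact_mod_cast h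
    exact_mod_cast (by omega : (1:ℤ) ≤ n)

variable {K : Type} [Field K]

/-- Lemma A: if `s` is a unit then `s² - a` is a unit (since `a` is a nonsquare
mod the maximal ideal, by anisotropy and Hensel). -/
theorem lemA (V : DVal K) (hcomp : V.IsComplete) (hchar : V.ResCharNeTwo)
    (a ϖ : K) (ha0 : a ≠ 0) (hva : V.ν a = 0) (haniso : QAniso a ϖ)
    (s : K) (hs : V.w s = 0) : V.w (s * s - a) = 0 := by
  have hsne : s ≠ 0 := by
    intro h; rw [h, V.w_zero] at hs; exact absurd hs (by simp)
  have hwa : V.w a = 0 := by rw [V.w_of_ne ha0, hva]; rfl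
  have hge : 0 ≤ V.w (s * s - a) := by
    have := V.w_sub (s * s) a
    rw [V.w_mul, hs, hwa] at this
    simpa using this
  by_cases hzero : s * s - a = 0
  · exfalso
    obtain ⟨h1, _, _, _⟩ := haniso s 1 0 0 (by ring_nf; linear_combination hzero)
    exact hsne h1
  refine by_contra fun hne => ?_
  have h1le : 1 ≤ V.w (s * s - a) := wt_one_le hge (by
    intro h; exact hne h)
  -- a / (s*s) is ≡ 1 mod m, so a is a square: contradiction with anisotropy
  have hss : s * s ≠ 0 := mul_ne_zero hsne hsne
  have hνss : V.ν (s * s) = 0 := by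
    have := V.w_mul s s
    rw [hs] at this
    have h2 := V.w_of_ne hss
    rw [h2] at this
    exact_mod_cast this
  have hdiff : a / (s * s) - 1 = -((s * s - a) / (s * s)) := by field_simp; ring
  have hw1 : 1 ≤ V.w (a / (s * s) - 1) := by
    rw [hdiff, V.w_neg, div_eq_mul_inv, V.w_mul, V.w_inv hss, hνss]
    calc (1 : WithTop ℤ) = 1 + -(0:ℤ) := by simp
      _ ≤ V.w (s * s - a) + -(0:ℤ) := by exact add_le_add h1le (le_refl _)
  obtain ⟨r, hr, _⟩ := V.sqrt_exists hcomp hchar _ hw1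
  have hra : (s * r) * (s * r) = a := by
    have : r * r * (s * s) = a := by
      rw [hr]; field_simp
    linear_combination this
  obtain ⟨_, h1, _, _⟩ := haniso (s * r) 1 0 0 (by ring_nf; linear_combination hra)
  exact one_ne_zero h1

/-- Lemma B: the valuation of `δ² - aα²` is `2·min(w δ, w α)`. -/
theorem lemB (V : DVal K) (hcomp : V.IsComplete) (hchar : V.ResCharNeTwo)
    (a ϖ : K) (ha0 : a ≠ 0) (hva : V.ν a = 0) (haniso : QAniso a ϖ)
    (δ α : K) :
    V.w (δ * δ - a * (α * α)) = min (V.w δ) (V.w α) + min (V.w δ) (V.w α) := by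
  have hwa : V.w a = 0 := by rw [V.w_of_ne ha0, hva]; rfl
  by_cases hδ : δ = 0
  · by_cases hα : α = 0
    · simp [hδ, hα, V.w_zero]
    · have : δ * δ - a * (α * α) = -(a * (α * α)) := by rw [hδ]; ring
      rw [this, V.w_neg, V.w_mul, V.w_mul, hwa, hδ, V.w_zero]
      rw [min_eq_right le_top]
      simp
  · by_cases hα : α = 0
    · have : δ * δ - a * (α * α) = δ * δ := by rw [hα]; ring
      rw [this, V.w_mul, hα, V.w_zero, min_eq_left le_top]
    · -- both nonzero
      rcases lt_trichotomy (V.ν δ) (V.ν α) with h | h | h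
      · have hlt : V.w (δ * δ) < V.w (-(a * (α * α))) := by
          rw [V.w_neg, V.w_mul, V.w_mul, V.w_mul, hwa, V.w_of_ne hδ, V.w_of_ne hα]
          rw [zero_add, ← WithTop.coe_add, ← WithTop.coe_add]
          exact_mod_cast (by omega : V.ν δ + V.ν δ < V.ν α + V.ν α)
        have := V.w_add_eq_left hlt
        rw [show δ * δ + -(a * (α * α)) = δ * δ - a * (α * α) by ring] at this
        rw [this, V.w_mul, min_eq_left]
        rw [V.w_of_ne hδ, V.w_of_ne hα]
        exact_mod_cast h.le
      · -- equal valuations: use Lemma A with s = δ/α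
        set s := δ / α with hs_def
        have hws : V.w s = 0 := by
          rw [hs_def, div_eq_mul_inv, V.w_mul, V.w_inv hα, V.w_of_ne hδ, h]
          exact_mod_cast (by omega : V.ν α + -(V.ν α) = 0)
        have hA := lemA V hcomp hchar a ϖ ha0 hva haniso s hws
        have hfact : δ * δ - a * (α * α) = (α * α) * (s * s - a) := by
          rw [hs_def]; field_simp
        rw [hfact, V.w_mul, hA, add_zero, V.w_mul]
        rw [V.w_of_ne hδ, V.w_of_ne hα, h, min_self]
      · have hlt : V.w (-(a * (α * α))) < V.w (δ * δ) := by
          rw [V.w_neg, V.w_mul, V.w_mul, V.w_mul, hwa, V.w_of_ne hδ, V.w_of_ne hα]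
          rw [zero_add, ← WithTop.coe_add, ← WithTop.coe_add]
          exact_mod_cast (by omega : V.ν α + V.ν α < V.ν δ + V.ν δ)
        have := V.w_add_eq_left hlt
        rw [show -(a * (α * α)) + δ * δ = δ * δ - a * (α * α) by ring] at this
        rw [this, V.w_neg, V.w_mul, V.w_mul, hwa, zero_add, min_eq_right]
        rw [V.w_of_ne hδ, V.w_of_ne hα]
        exact_mod_cast h.le

end Helpers

/-- The final quaternion identity `u = σ(t)·(γz)·t`, as an explicit computation. -/
theorem stmt10_final {K : Type} [Field K] (a ϖ d c2 c3 γ δ α : K) (hd0 : d ≠ 0) (hϖ0 : ϖ ≠ 0)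
    (hkey : d * d * (d * d) - d * d = ϖ * (a * (c3 * c3) - c2 * c2))
    (hαe : α = -(2 * γ * ϖ * c2)) (hδe : δ = -(2 * a * γ * ϖ * c3)) :
    (⟨δ, α, 0, γ⟩ : QuaternionAlgebra K a 0 ϖ) =
      ((⟨0, 0, 1, 0⟩ : QuaternionAlgebra K a 0 ϖ) * ⟨d, -0, -(-c2 / d), -(c3 / d)⟩ * ⟨0, 0, ϖ⁻¹, 0⟩) *
        ⟨0, 0, 0, γ⟩ * ⟨d, 0, -c2 / d, c3 / d⟩ := by
  ext <;> simp only [QuaternionAlgebra.mk_mul_mk, zero_mul, mul_zero, add_zero, zero_add, sub_zero]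
  · rw [hδe]; field_simp; ring
  · rw [hαe]; field_simp; ring
  · field_simp; ring
  · field_simp; linear_combination (-γ) * hkey

/-- if `u = δ + αx + γz` is symmetric of value `1/2` for `σ = τ_y` then
`γ ∈ O_K^×` and `⟨u⟩ ≅ ⟨γz⟩` over `(D, τ_y)`. -/
theorem stmt_10 (K : Type) [Field K] (V : DVal K)
    -- K is complete with residue field of characteristic ≠ 2
    (hcomp : V.IsComplete) (hchar : V.ResCharNeTwo)
    -- D = ℍ[K,a,ϖ] with a ∈ O_K^×, ϖ a uniformizer, D a division ring
    (a ϖ : K) (ha0 : a ≠ 0) (hva : V.ν a = 0) (hϖ0 : ϖ ≠ 0) (hvϖ : V.ν ϖ = 1)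
    (haniso : QAniso a ϖ)
    -- σ = τ_y (μ = λ⁻¹)
    (mu : QuaternionAlgebra K a 0 ϖ)
    (hmu : (⟨0, 0, 1, 0⟩ : QuaternionAlgebra K a 0 ϖ) * mu = 1) (hmu' : mu * (⟨0, 0, 1, 0⟩ : QuaternionAlgebra K a 0 ϖ) = 1)
    (σ : QuaternionAlgebra K a 0 ϖ → QuaternionAlgebra K a 0 ϖ)
    (hσ : ∀ u, σ u = (⟨0, 0, 1, 0⟩ : QuaternionAlgebra K a 0 ϖ) * qtau u * mu)
    -- u = δ + αx + γz with coordinates in O_K and ν_D(u) = 1/2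
    (δ α γ : K) (hδ : V.Int δ) (hα : V.Int α) (hγ : V.Int γ)
    (hu0 : (⟨δ, α, 0, γ⟩ : QuaternionAlgebra K a 0 ϖ) ≠ 0)
    (hval : qnu V a ϖ (⟨δ, α, 0, γ⟩ : QuaternionAlgebra K a 0 ϖ) = 1 / 2) :
    V.IntUnit γ ∧ ∃ t : QuaternionAlgebra K a 0 ϖ, IsUnit t ∧
      (⟨δ, α, 0, γ⟩ : QuaternionAlgebra K a 0 ϖ) =
        σ t * (⟨0, 0, 0, γ⟩ : QuaternionAlgebra K a 0 ϖ) * t := by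
  have h2 := hchar.1
  have hν2 := hchar.2
  have hwa : V.w a = 0 := by rw [V.w_of_ne ha0, hva]; rfl
  have hwϖ : V.w ϖ = 1 := by rw [V.w_of_ne hϖ0, hvϖ]; rfl
  set u : QuaternionAlgebra K a 0 ϖ := ⟨δ, α, 0, γ⟩ with hu_def
  have hqn : qnrd a ϖ u = (δ * δ - a * (α * α)) + a * ϖ * (γ * γ) := by
    show δ ^ 2 - a * α ^ 2 - ϖ * 0 ^ 2 + a * ϖ * γ ^ 2 = _
    ring
  have hNr0 : qnrd a ϖ u ≠ 0 := by
    intro h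
    obtain ⟨h1, h2', h3, h4⟩ := haniso δ α 0 γ (by rw [hqn] at h; linear_combination h)
    apply hu0
    rw [hu_def, h1, h2', h4]
    ext <;> rfl
  have hν1 : V.ν (qnrd a ϖ u) = 1 := by
    have h := hval
    unfold qnu at h
    have : (V.ν (qnrd a ϖ u) : ℚ) = 1 := by
      field_simp at h
      exact_mod_cast h
    exact_mod_cast this
  have hwNr : V.w (qnrd a ϖ u) = 1 := by
    rw [V.w_of_ne hNr0, hν1]; rfl
  have hB := lemB V hcomp ⟨h2, hν2⟩ a ϖ ha0 hva haniso δ α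
  set m := min (V.w δ) (V.w α) with hm_def
  -- γ is a unit
  have hγnot : ¬ (1 ≤ V.w γ) := by
    intro h1γ
    have whq : (3 : WithTop ℤ) ≤ V.w (a * ϖ * (γ * γ)) := by
      rw [V.w_mul, V.w_mul, V.w_mul, hwa, hwϖ]
      calc (3 : WithTop ℤ) = 0 + 1 + (1 + 1) := by norm_num
        _ ≤ 0 + 1 + (V.w γ + V.w γ) := by
            exact add_le_add (le_refl _) (add_le_add h1γ h1γ)
    rcases lt_or_ge (V.w (δ * δ - a * (α * α))) (V.w (a * ϖ * (γ * γ))) with hc | hc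
    · have := V.w_add_eq_left hc
      rw [← hqn] at this
      rw [hwNr, hB] at this
      exact wt_two_ne_one this.symm
    · have hge : (3 : WithTop ℤ) ≤ V.w (qnrd a ϖ u) := by
        rw [hqn]
        refine le_trans ?_ (V.w_add _ _)
        rw [min_eq_right hc] at *
        exact whq
      rw [hwNr] at hge
      exact absurd hge (by norm_num)
  have hγne : γ ≠ 0 := by
    intro h; apply hγnot; rw [h, V.w_zero]; exact le_top
  have hνγ : V.ν γ = 0 := by
    rcases hγ with h | h
    · exact absurd h hγne
    · by_contra hne
      apply hγnot
      rw [V.w_of_ne hγne]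
      exact_mod_cast (by omega : (1:ℤ) ≤ V.ν γ)
  have hwγ : V.w γ = 0 := by rw [V.w_of_ne hγne, hνγ]; rfl
  refine ⟨⟨hγne, hνγ⟩, ?_⟩
  -- δ and α are in the maximal ideal
  have hwq1 : V.w (a * ϖ * (γ * γ)) = 1 := by
    rw [V.w_mul, V.w_mul, V.w_mul, hwa, hwϖ, hwγ]; norm_num
  have hm1 : 1 ≤ m := by
    apply wt_one_le_half
    rw [← hB]
    have hsub : δ * δ - a * (α * α) = qnrd a ϖ u - a * ϖ * (γ * γ) := by
      rw [hqn]; ring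
    rw [hsub]
    refine le_trans ?_ (V.w_sub _ _)
    rw [hwNr, hwq1]; norm_num
  have hwδ : 1 ≤ V.w δ := le_trans hm1 (min_le_left _ _)
  have hwα : 1 ≤ V.w α := le_trans hm1 (min_le_right _ _)
  -- set up the Newton data
  have h2γϖ : 2 * γ * ϖ ≠ 0 := mul_ne_zero (mul_ne_zero h2 hγne) hϖ0
  have hν2γϖ : V.ν (2 * γ * ϖ) = 1 := by
    rw [V.ν_mul _ _ (mul_ne_zero h2 hγne) hϖ0, V.ν_mul _ _ h2 hγne, hν2, hνγ, hvϖ]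
    norm_num
  have h2aγϖ : 2 * a * γ * ϖ ≠ 0 := mul_ne_zero (mul_ne_zero (mul_ne_zero h2 ha0) hγne) hϖ0
  have hν2aγϖ : V.ν (2 * a * γ * ϖ) = 1 := by
    rw [V.ν_mul _ _ (mul_ne_zero (mul_ne_zero h2 ha0) hγne) hϖ0,
      V.ν_mul _ _ (mul_ne_zero h2 ha0) hγne, V.ν_mul _ _ h2 ha0, hν2, hva, hνγ, hvϖ]
    norm_num
  obtain ⟨c2, hc2_def⟩ : ∃ c2 : K, c2 = -α / (2 * γ * ϖ) := ⟨_, rfl⟩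
  obtain ⟨c3, hc3_def⟩ : ∃ c3 : K, c3 = -δ / (2 * a * γ * ϖ) := ⟨_, rfl⟩
  have hαe : α = -(2 * γ * ϖ * c2) := by rw [hc2_def]; field_simp
  have hδe : δ = -(2 * a * γ * ϖ * c3) := by rw [hc3_def]; field_simp
  have hwc2 : 0 ≤ V.w c2 := by
    rw [hc2_def, div_eq_mul_inv, V.w_mul, V.w_inv h2γϖ, hν2γϖ, V.w_neg]
    calc (0 : WithTop ℤ) = 1 + -(1:ℤ) := by exact_mod_cast rfl
      _ ≤ V.w α + -(1:ℤ) := add_le_add hwα (le_refl _)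
  have hwc3 : 0 ≤ V.w c3 := by
    rw [hc3_def, div_eq_mul_inv, V.w_mul, V.w_inv h2aγϖ, hν2aγϖ, V.w_neg]
    calc (0 : WithTop ℤ) = 1 + -(1:ℤ) := by exact_mod_cast rfl
      _ ≤ V.w δ + -(1:ℤ) := add_le_add hwδ (le_refl _)
  obtain ⟨r, hr_def⟩ : ∃ r : K, r = a * (c3 * c3) - c2 * c2 := ⟨_, rfl⟩
  have hwr : 0 ≤ V.w r := by
    rw [hr_def]
    refine le_trans (le_min ?_ ?_) (V.w_sub _ _)
    · rw [V.w_mul, V.w_mul, hwa]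
      calc (0:WithTop ℤ) = 0 + (0 + 0) := by norm_num
        _ ≤ _ := add_le_add (le_refl _) (add_le_add hwc3 hwc3)
    · rw [V.w_mul]; calc (0:WithTop ℤ) = 0 + 0 := by norm_num
        _ ≤ _ := add_le_add hwc2 hwc2
  have h40 : (4 : K) ≠ 0 := by
    rw [show (4:K) = 2*2 by norm_num]; exact mul_ne_zero h2 h2
  have hν4 : V.ν 4 = 0 := by
    have := V.ν_mul 2 2 h2 h2
    rw [show (2:K)*2 = 4 by norm_num] at this
    rw [this, hν2]
    norm_num
  have hsq1 : 1 ≤ V.w ((1 + 4 * ϖ * r) - 1) := by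
    rw [show (1 + 4 * ϖ * r) - 1 = 4 * ϖ * r by ring, V.w_mul, V.w_mul,
      V.w_of_ne h40, hν4, hwϖ]
    calc (1 : WithTop ℤ) = (0:ℤ) + 1 + 0 := by norm_num
      _ ≤ (0:ℤ) + 1 + V.w r := add_le_add (le_refl _) hwr
  obtain ⟨s1, hs1, hs1w⟩ := V.sqrt_exists hcomp hchar _ hsq1
  obtain ⟨Dq, hDq_def⟩ : ∃ Dq : K, Dq = (1 + s1) / 2 := ⟨_, rfl⟩
  have hDq1 : 1 ≤ V.w (Dq - 1) := by
    rw [show Dq - 1 = (s1 - 1) * 2⁻¹ by rw [hDq_def]; field_simp; ring,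
      V.w_mul, V.w_inv h2, hν2]
    calc (1 : WithTop ℤ) = 1 + -(0:ℤ) := by norm_num
      _ ≤ V.w (s1 - 1) + -(0:ℤ) := add_le_add hs1w (le_refl _)
  obtain ⟨d, hd, hdw⟩ := V.sqrt_exists hcomp hchar _ hDq1
  have hd0 : d ≠ 0 := by
    intro h
    rw [h] at hdw
    have : V.w ((0:K) - 1) = 0 := by
      rw [show (0:K) - 1 = -1 by ring, V.w_neg, V.w_one]
    rw [this] at hdw
    exact absurd hdw (by norm_num)
  have hkey : d * d * (d * d) - d * d = ϖ * r := by
    rw [hd, hDq_def]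
    field_simp
    linear_combination hs1
  -- the isometry t
  obtain ⟨t, ht_def⟩ : ∃ t : QuaternionAlgebra K a 0 ϖ, t = ⟨d, 0, -c2 / d, c3 / d⟩ := ⟨_, rfl⟩
  obtain ⟨N, hN_def⟩ : ∃ N : K,
      N = d * d * (d * d) - ϖ * (c2 * c2) + a * ϖ * (c3 * c3) := ⟨_, rfl⟩
  have hN0 : N ≠ 0 := by
    intro h
    rw [hN_def] at h
    refine hd0 (haniso d 0 (-c2 / d) (c3 / d) ?_).1
    field_simp
    linear_combination h
  have hunit : IsUnit t := by
    refine ⟨⟨t, ⟨d * d * d / N, 0, c2 * d / N, -(c3 * d) / N⟩, ?_, ?_⟩, rfl⟩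
    · rw [ht_def]
      ext <;> simp only [QuaternionAlgebra.mk_mul_mk, QuaternionAlgebra.re_one,
        QuaternionAlgebra.imI_one, QuaternionAlgebra.imJ_one, QuaternionAlgebra.imK_one]
      · field_simp [hd0, hN0]; linear_combination -hN_def
      · field_simp [hd0, hN0]; ring
      · field_simp [hd0, hN0]; ring
      · field_simp [hd0, hN0]; ring
    · rw [ht_def]
      ext <;> simp only [QuaternionAlgebra.mk_mul_mk, QuaternionAlgebra.re_one,
        QuaternionAlgebra.imI_one, QuaternionAlgebra.imJ_one, QuaternionAlgebra.imK_one]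
      · field_simp [hd0, hN0]; linear_combination -hN_def
      · field_simp [hd0, hN0]; ring
      · field_simp [hd0, hN0]; ring
      · field_simp [hd0, hN0]; ring
  -- identify mu
  have hm0 : (⟨0, 0, 1, 0⟩ : QuaternionAlgebra K a 0 ϖ) * ⟨0, 0, ϖ⁻¹, 0⟩ = 1 := by
    ext <;> simp only [QuaternionAlgebra.mk_mul_mk, QuaternionAlgebra.re_one,
      QuaternionAlgebra.imI_one, QuaternionAlgebra.imJ_one, QuaternionAlgebra.imK_one]
      <;> field_simp <;> ring
  have hmueq : mu = ⟨0, 0, ϖ⁻¹, 0⟩ := by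
    calc mu = mu * 1 := (mul_one mu).symm
      _ = mu * ((⟨0, 0, 1, 0⟩ : QuaternionAlgebra K a 0 ϖ) * ⟨0, 0, ϖ⁻¹, 0⟩) := by rw [hm0]
      _ = (mu * (⟨0, 0, 1, 0⟩ : QuaternionAlgebra K a 0 ϖ)) * ⟨0, 0, ϖ⁻¹, 0⟩ := (mul_assoc _ _ _).symm
      _ = 1 * ⟨0, 0, ϖ⁻¹, 0⟩ := by rw [hmu']
      _ = ⟨0, 0, ϖ⁻¹, 0⟩ := one_mul _
  refine ⟨t, hunit, ?_⟩
  rw [hσ, hmueq, ht_def]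
  rw [show qtau (⟨d, 0, -c2 / d, c3 / d⟩ : QuaternionAlgebra K a 0 ϖ) =
    ⟨d, -0, -(-c2 / d), -(c3 / d)⟩ from rfl]
  rw [hr_def] at hkey
  exact stmt10_final a ϖ d c2 c3 γ δ α hd0 hϖ0 hkey hαe hδe
end
end

section
/- Suppose a, b ∈ O_K^× and the quadratic form ⟨1,-a,-b,ab⟩ is anisotropic over K (i.e. ℍ[K,a,b] is a division ring). Then the quadratic form ⟨1,-ā,-b̄,āb̄⟩ is anisotropic over the residue field k: for all (e₀,e₁,e₂,e₃) ∈ k⁴ not all zero, e₀² - ā·e₁² - b̄·e₂² + ā·b̄·e₃² ≠ 0. Consequently the residue algebra ℍ[k,ā,b̄] is a division ring. -/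
noncomputable section

namespace Stmt12Aux

variable {K : Type} [Field K] (V : DVal K)

/-- `x = 0` or `ν x ≥ M`. -/
def VB (M : ℤ) (x : K) : Prop := x = 0 ∨ M ≤ V.ν x

lemma VB_zero (M : ℤ) : VB V M (0 : K) := Or.inl rfl

lemma VB_mono {M M' : ℤ} (h : M' ≤ M) {x : K} (hx : VB V M x) : VB V M' x :=
  hx.imp id h.trans

lemma nu_neg_one : V.ν (-1 : K) = 0 := by
  have h := V.ν_mul (-1 : K) (-1) (by norm_num) (by norm_num)
  rw [neg_mul_neg, one_mul, V.ν_one] at h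
  omega

lemma nu_neg {x : K} (hx : x ≠ 0) : V.ν (-x) = V.ν x := by
  have h := V.ν_mul (-1 : K) x (by norm_num) hx
  rw [neg_one_mul, nu_neg_one] at h
  omega

lemma nu_inv {x : K} (hx : x ≠ 0) : V.ν x⁻¹ = -V.ν x := by
  have h := V.ν_mul x x⁻¹ hx (inv_ne_zero hx)
  rw [mul_inv_cancel₀ hx, V.ν_one] at h
  omega

lemma nu_sq {x : K} (hx : x ≠ 0) : V.ν (x ^ 2) = 2 * V.ν x := by
  have h := V.ν_mul x x hx hx
  rw [← pow_two] at h
  omega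

lemma VB_neg {M : ℤ} {x : K} (h : VB V M x) : VB V M (-x) := by
  rcases h with h | h
  · exact Or.inl (by rw [h, neg_zero])
  · by_cases hx : x = 0
    · exact Or.inl (by rw [hx, neg_zero])
    · exact Or.inr (by rw [nu_neg V hx]; exact h)

lemma VB_add {M : ℤ} {x y : K} (hx : VB V M x) (hy : VB V M y) : VB V M (x + y) := by
  by_cases h0 : x + y = 0
  · exact Or.inl h0
  rcases hx with rfl | hx
  · rw [zero_add] at h0 ⊢; exact hy
  rcases hy with rfl | hy
  · rw [add_zero] at h0 ⊢; exact Or.inr hx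
  by_cases hx0 : x = 0
  · subst hx0; rw [zero_add] at h0 ⊢; exact Or.inr hy
  by_cases hy0 : y = 0
  · subst hy0; rw [add_zero] at h0 ⊢; exact Or.inr hx
  have := V.ν_add x y hx0 hy0 h0
  exact Or.inr (by omega)

lemma VB_sub {M : ℤ} {x y : K} (hx : VB V M x) (hy : VB V M y) : VB V M (x - y) := by
  rw [sub_eq_add_neg]; exact VB_add V hx (VB_neg V hy)

lemma VB_mul {M M' : ℤ} {x y : K} (hx : VB V M x) (hy : VB V M' y) :
    VB V (M + M') (x * y) := by
  rcases hx with rfl | hx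
  · exact Or.inl (zero_mul y)
  rcases hy with rfl | hy
  · exact Or.inl (mul_zero x)
  by_cases hx0 : x = 0
  · exact Or.inl (by rw [hx0, zero_mul])
  by_cases hy0 : y = 0
  · exact Or.inl (by rw [hy0, mul_zero])
  have := V.ν_mul x y hx0 hy0
  exact Or.inr (by omega)

lemma VB_div_unit {M : ℤ} {x c : K} (hc : c ≠ 0) (hvc : V.ν c = 0) (h : VB V M x) :
    VB V M (x / c) := by
  rcases h with rfl | h
  · exact Or.inl (zero_div c)
  by_cases hx0 : x = 0
  · exact Or.inl (by rw [hx0, zero_div])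
  refine Or.inr ?_
  rw [div_eq_mul_inv, V.ν_mul x c⁻¹ hx0 (inv_ne_zero hc), nu_inv V hc]
  omega

/-- Ultrametric: adding something strictly smaller doesn't change the valuation. -/
lemma nu_add_eq {x y : K} (hx : x ≠ 0) (hy : VB V (V.ν x + 1) y) :
    x + y ≠ 0 ∧ V.ν (x + y) = V.ν x := by
  by_cases hy0 : y = 0
  · subst hy0; rw [add_zero]; exact ⟨hx, rfl⟩
  rcases hy with rfl | hvy
  · exact absurd rfl hy0
  have hs : x + y ≠ 0 := by
    intro h
    have hyx : y = -x := eq_neg_of_add_eq_zero_right h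
    rw [hyx, nu_neg V hx] at hvy; omega
  have h1 := V.ν_add x y hx hy0 hs
  have h2 := V.ν_add (x + y) (-y) hs (neg_ne_zero.mpr hy0)
    (by rw [add_neg_cancel_right]; exact hx)
  rw [add_neg_cancel_right, nu_neg V hy0] at h2
  exact ⟨hs, by omega⟩

/-- One Newton step for computing a square root of `c`. -/
lemma newton_step (h2 : (2:K) ≠ 0) (hv2 : V.ν 2 = 0) (c x : K) (hx : x ≠ 0)
    (hx0 : V.ν x = 0) (t : ℤ) (ht : 1 ≤ t) (hvb : VB V t (x ^ 2 - c)) :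
    (x + c / x) / 2 ≠ 0 ∧ V.ν ((x + c / x) / 2) = 0 ∧
      VB V (t + 1) (((x + c / x) / 2) ^ 2 - c) ∧ VB V t ((x + c / x) / 2 - x) := by
  have h2x : (2:K) * x ≠ 0 := mul_ne_zero h2 hx
  have hv2x : V.ν (2 * x) = 0 := by rw [V.ν_mul 2 x h2 hx]; omega
  set d : K := (c - x ^ 2) / (2 * x) with hd
  have hdvb : VB V t d := by
    have hvb' : VB V t (c - x ^ 2) := by
      have := VB_neg V hvb; rwa [neg_sub] at this
    exact VB_div_unit V h2x hv2x hvb'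
  have hxd : (x + c / x) / 2 = x + d := by
    rw [hd]; field_simp; ring
  have h1 : x + d ≠ 0 ∧ V.ν (x + d) = V.ν x :=
    nu_add_eq V hx (VB_mono V (by omega) hdvb)
  have hsq : ((x + c / x) / 2) ^ 2 - c = ((x ^ 2 - c) / (2 * x)) ^ 2 := by
    field_simp; ring
  refine ⟨hxd ▸ h1.1, by rw [hxd, h1.2, hx0], ?_, ?_⟩
  · rw [hsq]
    by_cases hc0 : x ^ 2 - c = 0
    · exact Or.inl (by rw [hc0]; simp)
    · have hw : (x ^ 2 - c) / (2 * x) ≠ 0 := div_ne_zero hc0 h2x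
      have hvw : V.ν ((x ^ 2 - c) / (2 * x)) = V.ν (x ^ 2 - c) := by
        rw [div_eq_mul_inv, V.ν_mul _ _ hc0 (inv_ne_zero h2x), nu_inv V h2x]; omega
      rcases hvb with h | h
      · exact absurd h hc0
      · refine Or.inr ?_
        rw [nu_sq V hw, hvw]; omega
  · rw [hxd, add_sub_cancel_left]; exact hdvb

/-- The Newton iteration sequence for `√c` starting at `u`. -/
def newtonSeq (c u : K) : ℕ → K
  | 0 => u
  | n + 1 => (newtonSeq c u n + c / newtonSeq c u n) / 2

variable {c u : K}

lemma newtonSeq_inv (h2 : (2:K) ≠ 0) (hv2 : V.ν 2 = 0)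
    (hu : u ≠ 0) (hu0 : V.ν u = 0) (hc : VB V 1 (u ^ 2 - c)) (n : ℕ) :
    newtonSeq c u n ≠ 0 ∧ V.ν (newtonSeq c u n) = 0 ∧
      VB V ((n : ℤ) + 1) (newtonSeq c u n ^ 2 - c) := by
  induction n with
  | zero => exact ⟨hu, hu0, by simpa [newtonSeq] using hc⟩
  | succ n ih =>
    obtain ⟨h1, h1', h3⟩ := ih
    obtain ⟨a1, a2, a3, _⟩ :=
      newton_step V h2 hv2 c (newtonSeq c u n) h1 h1' ((n : ℤ) + 1) (by omega) h3
    exact ⟨a1, a2, VB_mono V (by push_cast; omega) a3⟩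

lemma newtonSeq_diff (h2 : (2:K) ≠ 0) (hv2 : V.ν 2 = 0)
    (hu : u ≠ 0) (hu0 : V.ν u = 0) (hc : VB V 1 (u ^ 2 - c)) (n : ℕ) :
    VB V ((n : ℤ) + 1) (newtonSeq c u (n + 1) - newtonSeq c u n) := by
  obtain ⟨h1, h1', h3⟩ := newtonSeq_inv V h2 hv2 hu hu0 hc n
  exact (newton_step V h2 hv2 c (newtonSeq c u n) h1 h1' ((n : ℤ) + 1) (by omega) h3).2.2.2

lemma newtonSeq_cauchy (h2 : (2:K) ≠ 0) (hv2 : V.ν 2 = 0)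
    (hu : u ≠ 0) (hu0 : V.ν u = 0) (hc : VB V 1 (u ^ 2 - c)) (n k : ℕ) :
    VB V ((n : ℤ) + 1) (newtonSeq c u (n + k) - newtonSeq c u n) := by
  induction k with
  | zero => exact Or.inl (by simp)
  | succ k ih =>
    have h1 := newtonSeq_diff V h2 hv2 hu hu0 hc (n + k)
    have := VB_add V (VB_mono V (show (n : ℤ) + 1 ≤ ((n + k : ℕ) : ℤ) + 1 by push_cast; omega) h1) ih
    rw [sub_add_sub_cancel] at this
    exact this

lemma hensel (hcomp : V.IsComplete) (h2 : (2:K) ≠ 0) (hv2 : V.ν 2 = 0)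
    (hu : u ≠ 0) (hu0 : V.ν u = 0) (hc : VB V 1 (u ^ 2 - c)) : ∃ x : K, x ^ 2 = c := by
  have hinv := newtonSeq_inv V h2 hv2 hu hu0 hc
  have hcau : ∀ M : ℤ, ∃ N : ℕ, ∀ m n : ℕ, N ≤ m → N ≤ n →
      newtonSeq c u m - newtonSeq c u n = 0 ∨ M ≤ V.ν (newtonSeq c u m - newtonSeq c u n) := by
    intro M
    refine ⟨M.toNat, fun m n hm hn => ?_⟩
    have key : ∀ p q : ℕ, p ≤ q → VB V ((p : ℤ) + 1) (newtonSeq c u q - newtonSeq c u p) := by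
      intro p q hpq
      obtain ⟨k, rfl⟩ := Nat.exists_eq_add_of_le hpq
      exact newtonSeq_cauchy V h2 hv2 hu hu0 hc p k
    have hMn : M ≤ (n : ℤ) + 1 := by
      have h' := Int.self_le_toNat M
      have : (M.toNat : ℤ) ≤ (n : ℤ) := by exact_mod_cast hn
      omega
    have hMm : M ≤ (m : ℤ) + 1 := by
      have h' := Int.self_le_toNat M
      have : (M.toNat : ℤ) ≤ (m : ℤ) := by exact_mod_cast hm
      omega
    rcases le_total n m with h | h
    · exact VB_mono V hMn (key n m h)
    · have := VB_neg V (key m n h)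
      rw [neg_sub] at this
      exact VB_mono V hMm this
  obtain ⟨L, hL⟩ := hcomp _ hcau
  refine ⟨L, ?_⟩
  by_contra hne
  have hL0 : L ≠ 0 := by
    intro h0
    subst h0
    obtain ⟨N, hN⟩ := hL 1
    have := hN N le_rfl
    rw [sub_zero] at this
    rcases this with h | h
    · exact (hinv N).1 h
    · rw [(hinv N).2.1] at h; omega
  set M := V.ν (L ^ 2 - c) with hM
  have hLc : L ^ 2 - c ≠ 0 := sub_ne_zero.mpr hne
  set B := min (V.ν L) 0 with hB
  set T := M + 1 with hT
  set M₀ := max T (T - B) with hM₀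
  obtain ⟨N, hN⟩ := hL M₀
  set n := max N T.toNat with hn
  obtain ⟨hf1, hf2, hf3⟩ := hinv n
  have h1 : VB V M₀ (newtonSeq c u n - L) := hN n (le_max_left _ _)
  have h3 : VB V B (newtonSeq c u n + L) := by
    by_cases h0 : newtonSeq c u n + L = 0
    · exact Or.inl h0
    · have := V.ν_add _ _ hf1 hL0 h0
      rw [hf2] at this
      exact Or.inr (by omega)
  have hprod := VB_mul V h1 h3
  have hTn : T ≤ (n : ℤ) + 1 := by
    have h' := Int.self_le_toNat T
    have : (T.toNat : ℤ) ≤ (n : ℤ) := by exact_mod_cast le_max_right N T.toNat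
    omega
  have hfinal : VB V T (L ^ 2 - c) := by
    have hsum := VB_sub V (VB_mono V hTn hf3) (VB_mono V (show T ≤ M₀ + B by omega) hprod)
    have heq : newtonSeq c u n ^ 2 - c -
        (newtonSeq c u n - L) * (newtonSeq c u n + L) = L ^ 2 - c := by ring
    rwa [heq] at hsum
  rcases hfinal with h | h
  · exact hLc h
  · omega


end Stmt12Aux


/-- if `a, b ∈ O_K^×` and `⟨1,-a,-b,ab⟩` is anisotropic over `K`, then the
residue form `⟨1,-ā,-b̄,āb̄⟩` is anisotropic over the residue field `k`: for lifts
`e₀,…,e₃ ∈ O_K` not all in `m_K`, the value `e₀² - a·e₁² - b·e₂² + ab·e₃²` is not in `m_K`. -/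
theorem stmt_12 (K : Type) [Field K] (V : DVal K)
    (hcomp : V.IsComplete) (hchar : V.ResCharNeTwo)
    (a b : K) (ha0 : a ≠ 0) (hva : V.ν a = 0) (hb0 : b ≠ 0) (hvb : V.ν b = 0)
    (haniso : QAniso a b) :
    ∀ e₀ e₁ e₂ e₃ : K, V.Int e₀ → V.Int e₁ → V.Int e₂ → V.Int e₃ →
      ¬ (V.MaxIdeal e₀ ∧ V.MaxIdeal e₁ ∧ V.MaxIdeal e₂ ∧ V.MaxIdeal e₃) →
      ¬ V.MaxIdeal (e₀ ^ 2 - a * e₁ ^ 2 - b * e₂ ^ 2 + a * b * e₃ ^ 2) := by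
  intro e₀ e₁ e₂ e₃ h₀ h₁ h₂ h₃ hnot hQ
  obtain ⟨h2ne, hv2⟩ := hchar
  set Q : K := e₀ ^ 2 - a * e₁ ^ 2 - b * e₂ ^ 2 + a * b * e₃ ^ 2 with hQdef
  have hQvb : Stmt12Aux.VB V 1 Q := hQ
  have unit_of : ∀ e : K, V.Int e → ¬ V.MaxIdeal e → e ≠ 0 ∧ V.ν e = 0 := by
    intro e hi hm
    rw [DVal.MaxIdeal] at hm
    push_neg at hm
    obtain ⟨hm1, hm2⟩ := hm
    rcases hi with rfl | hi
    · exact absurd rfl hm1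
    · exact ⟨hm1, by omega⟩
  by_cases k₀ : V.MaxIdeal e₀
  · by_cases k₁ : V.MaxIdeal e₁
    · by_cases k₂ : V.MaxIdeal e₂
      · by_cases k₃ : V.MaxIdeal e₃
        · exact hnot ⟨k₀, k₁, k₂, k₃⟩
        · -- e₃ is a unit
          obtain ⟨hu, hu0⟩ := unit_of e₃ h₃ k₃
          have hab0 : a * b ≠ 0 := mul_ne_zero ha0 hb0
          have hvab : V.ν (a * b) = 0 := by rw [V.ν_mul a b ha0 hb0]; omega
          have hc : Stmt12Aux.VB V 1
              (e₃ ^ 2 - (a * e₁ ^ 2 + b * e₂ ^ 2 - e₀ ^ 2) / (a * b)) := by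
            have heq : e₃ ^ 2 - (a * e₁ ^ 2 + b * e₂ ^ 2 - e₀ ^ 2) / (a * b) =
                Q / (a * b) := by
              rw [hQdef]; field_simp; ring
            rw [heq]
            exact Stmt12Aux.VB_div_unit V hab0 hvab hQvb
          obtain ⟨y, hy⟩ := Stmt12Aux.hensel V hcomp h2ne hv2 hu hu0 hc
          have hay : a * b * y ^ 2 = a * e₁ ^ 2 + b * e₂ ^ 2 - e₀ ^ 2 := by
            rw [hy]; field_simp
          obtain ⟨h00, h10, h20, hy0⟩ := haniso e₀ e₁ e₂ y (by linear_combination hay)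
          have hQe : Q = a * b * e₃ ^ 2 := by rw [hQdef, h00, h10, h20]; ring
          have hne : a * b * e₃ ^ 2 ≠ 0 := mul_ne_zero hab0 (pow_ne_zero 2 hu)
          rcases hQvb with h | h
          · exact hne (hQe ▸ h)
          · have hv : V.ν Q = 0 := by
              rw [hQe, V.ν_mul (a * b) _ hab0 (pow_ne_zero 2 hu),
                Stmt12Aux.nu_sq V hu, hu0, hvab]; norm_num
            omega
      · -- e₂ is a unit
        obtain ⟨hu, hu0⟩ := unit_of e₂ h₂ k₂
        have hc : Stmt12Aux.VB V 1
            (e₂ ^ 2 - (e₀ ^ 2 - a * e₁ ^ 2 + a * b * e₃ ^ 2) / b) := by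
          have heq : e₂ ^ 2 - (e₀ ^ 2 - a * e₁ ^ 2 + a * b * e₃ ^ 2) / b =
              -(Q / b) := by
            rw [hQdef]; field_simp; ring
          rw [heq]
          exact Stmt12Aux.VB_neg V (Stmt12Aux.VB_div_unit V hb0 hvb hQvb)
        obtain ⟨y, hy⟩ := Stmt12Aux.hensel V hcomp h2ne hv2 hu hu0 hc
        have hby : b * y ^ 2 = e₀ ^ 2 - a * e₁ ^ 2 + a * b * e₃ ^ 2 := by
          rw [hy]; field_simp
        obtain ⟨h00, h10, hy0, h30⟩ := haniso e₀ e₁ y e₃ (by linear_combination -hby)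
        have hQe : Q = -(b * e₂ ^ 2) := by rw [hQdef, h00, h10, h30]; ring
        have hne : b * e₂ ^ 2 ≠ 0 := mul_ne_zero hb0 (pow_ne_zero 2 hu)
        rcases hQvb with h | h
        · exact hne (neg_eq_zero.mp (hQe ▸ h))
        · have hv : V.ν Q = 0 := by
            rw [hQe, Stmt12Aux.nu_neg V hne, V.ν_mul b _ hb0 (pow_ne_zero 2 hu),
              Stmt12Aux.nu_sq V hu, hu0, hvb]; norm_num
          omega
    · -- e₁ is a unit
      obtain ⟨hu, hu0⟩ := unit_of e₁ h₁ k₁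
      have hc : Stmt12Aux.VB V 1
          (e₁ ^ 2 - (e₀ ^ 2 - b * e₂ ^ 2 + a * b * e₃ ^ 2) / a) := by
        have heq : e₁ ^ 2 - (e₀ ^ 2 - b * e₂ ^ 2 + a * b * e₃ ^ 2) / a =
            -(Q / a) := by
          rw [hQdef]; field_simp; ring
        rw [heq]
        exact Stmt12Aux.VB_neg V (Stmt12Aux.VB_div_unit V ha0 hva hQvb)
      obtain ⟨y, hy⟩ := Stmt12Aux.hensel V hcomp h2ne hv2 hu hu0 hc
      have hay : a * y ^ 2 = e₀ ^ 2 - b * e₂ ^ 2 + a * b * e₃ ^ 2 := by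
        rw [hy]; field_simp
      obtain ⟨h00, hy0, h20, h30⟩ := haniso e₀ y e₂ e₃ (by linear_combination -hay)
      have hQe : Q = -(a * e₁ ^ 2) := by rw [hQdef, h00, h20, h30]; ring
      have hne : a * e₁ ^ 2 ≠ 0 := mul_ne_zero ha0 (pow_ne_zero 2 hu)
      rcases hQvb with h | h
      · exact hne (neg_eq_zero.mp (hQe ▸ h))
      · have hv : V.ν Q = 0 := by
          rw [hQe, Stmt12Aux.nu_neg V hne, V.ν_mul a _ ha0 (pow_ne_zero 2 hu),
            Stmt12Aux.nu_sq V hu, hu0, hva]; norm_num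
        omega
  · -- e₀ is a unit
    obtain ⟨hu, hu0⟩ := unit_of e₀ h₀ k₀
    have hc : Stmt12Aux.VB V 1
        (e₀ ^ 2 - (a * e₁ ^ 2 + b * e₂ ^ 2 - a * b * e₃ ^ 2)) := by
      have heq : e₀ ^ 2 - (a * e₁ ^ 2 + b * e₂ ^ 2 - a * b * e₃ ^ 2) = Q := by
        rw [hQdef]; ring
      rw [heq]; exact hQvb
    obtain ⟨x, hx⟩ := Stmt12Aux.hensel V hcomp h2ne hv2 hu hu0 hc
    obtain ⟨hx0, h10, h20, h30⟩ := haniso x e₁ e₂ e₃ (by linear_combination hx)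
    have hQe : Q = e₀ ^ 2 := by rw [hQdef, h10, h20, h30]; ring
    have hne : e₀ ^ 2 ≠ 0 := pow_ne_zero 2 hu
    rcases hQvb with h | h
    · exact hne (hQe ▸ h)
    · have hv : V.ν Q = 0 := by rw [hQe, Stmt12Aux.nu_sq V hu, hu0]; norm_num
      omega
end
end

section
/- Suppose a, b ∈ O_K^× and D = ℍ[K,a,b] is a division ring. Then for every nonzero u = δ + αx + βy + γz ∈ D, the integer ν_K(Nrd(u)) = ν_K(δ² - aα² - bβ² + abγ²) is even. Hence ν_D takes integer values on D^×, i.e. the value group Γ_D of the unramified quaternion division algebra D equals ℤ, and π is a uniformizer of D. -/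
noncomputable section

section Basic
variable {K : Type} [Field K] (V : DVal K)

lemma nu_neg_one : V.ν (-1 : K) = 0 := by
  have h := V.ν_mul (-1) (-1) (by norm_num) (by norm_num)
  rw [show ((-1 : K) * -1) = 1 by ring, V.ν_one] at h
  omega

lemma nu_neg (x : K) (hx : x ≠ 0) : V.ν (-x) = V.ν x := by
  have h := V.ν_mul (-1) x (by norm_num) hx
  rw [neg_one_mul, nu_neg_one] at h
  omega

lemma nu_inv (x : K) (hx : x ≠ 0) : V.ν x⁻¹ = -V.ν x := by
  have h := V.ν_mul x x⁻¹ hx (inv_ne_zero hx)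
  rw [mul_inv_cancel₀ hx, V.ν_one] at h
  omega

lemma nu_div (x y : K) (hx : x ≠ 0) (hy : y ≠ 0) : V.ν (x / y) = V.ν x - V.ν y := by
  rw [div_eq_mul_inv, V.ν_mul x y⁻¹ hx (inv_ne_zero hy), nu_inv V y hy]
  omega

lemma nu_pow2 (x : K) (hx : x ≠ 0) : V.ν (x ^ 2) = 2 * V.ν x := by
  rw [sq, V.ν_mul x x hx hx]; omega

lemma add_dom (x y : K) (hx : x ≠ 0) (hy : y ≠ 0) (h : V.ν x < V.ν y) :
    x + y ≠ 0 ∧ V.ν (x + y) = V.ν x := by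
  have hs : x + y ≠ 0 := by
    intro h0
    have hyx : y = -x := by linear_combination h0
    rw [hyx, nu_neg V x hx] at h; omega
  refine ⟨hs, ?_⟩
  have h1 := V.ν_add x y hx hy hs
  by_contra hne
  have h3 := V.ν_add (x + y) (-y) hs (neg_ne_zero.mpr hy) (by rw [show x + y + -y = x by ring]; exact hx)
  rw [show x + y + -y = x by ring, nu_neg V y hy] at h3
  omega

lemma ge_add (M : ℤ) (x y : K) (hx : x = 0 ∨ M ≤ V.ν x) (hy : y = 0 ∨ M ≤ V.ν y) :
    x + y = 0 ∨ M ≤ V.ν (x + y) := by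
  by_cases hx0 : x = 0
  · rw [hx0, zero_add]; exact hy
  by_cases hy0 : y = 0
  · rw [hy0, add_zero]; exact hx
  have hx' : M ≤ V.ν x := hx.resolve_left hx0
  have hy' : M ≤ V.ν y := hy.resolve_left hy0
  by_cases hxy : x + y = 0
  · exact Or.inl hxy
  · right
    have h := V.ν_add x y hx0 hy0 hxy
    omega

lemma ge_mul (m n : ℤ) (x y : K) (hx : x = 0 ∨ m ≤ V.ν x) (hy : y = 0 ∨ n ≤ V.ν y) :
    x * y = 0 ∨ m + n ≤ V.ν (x * y) := by
  rcases hx with rfl | hx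
  · simp
  rcases hy with rfl | hy
  · simp
  by_cases hx0 : x = 0
  · simp [hx0]
  by_cases hy0 : y = 0
  · simp [hy0]
  right; rw [V.ν_mul x y hx0 hy0]; omega

end Basic

lemma sqrt_exists {K : Type} [Field K] (V : DVal K)
    (hcomp : V.IsComplete) (hchar : V.ResCharNeTwo)
    (c s : K) (hs0 : s ≠ 0) (hsv : V.ν s = 0)
    (hne : c - s ^ 2 ≠ 0) (hge : 1 ≤ V.ν (c - s ^ 2)) :
    ∃ t : K, t ≠ 0 ∧ t ^ 2 = c := by
  obtain ⟨h2, hv2⟩ := hchar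
  have hc0 : c ≠ 0 := by
    rintro rfl
    rw [show (0 : K) - s ^ 2 = -(s ^ 2) by ring, nu_neg V _ (pow_ne_zero 2 hs0),
      nu_pow2 V s hs0] at hge
    omega
  set t : ℕ → K := fun n => Nat.rec s (fun _ p => (p + c / p) / 2) n with ht
  have htS : ∀ n, t (n + 1) = (t n + c / t n) / 2 := fun n => rfl
  have inv : ∀ n, t n ≠ 0 ∧ V.ν (t n) = 0 ∧
      (t n ^ 2 - c = 0 ∨ (t n ^ 2 - c ≠ 0 ∧ (n + 1 : ℤ) ≤ V.ν (t n ^ 2 - c))) := by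
    intro n
    induction n with
    | zero =>
      have h00 : t 0 = s := rfl
      refine ⟨hs0, hsv, Or.inr ⟨?_, ?_⟩⟩
      · rw [h00]; exact fun h => hne (by linear_combination -h)
      · rw [h00, show s ^ 2 - c = -(c - s ^ 2) by ring, nu_neg V _ hne]; omega
    | succ n ih =>
      obtain ⟨h1, hv1, h3⟩ := ih
      rcases h3 with heq | ⟨hne', hge'⟩
      · have hceq : c = t n ^ 2 := by linear_combination -heq
        have heq2 : t (n + 1) = t n := by
          rw [htS, hceq]; field_simp; ring
        rw [heq2]; exact ⟨h1, hv1, Or.inl heq⟩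
      · have hr1 : (1 : ℤ) ≤ V.ν (t n ^ 2 - c) := by omega
        have h2t : (2 : K) * t n ≠ 0 := mul_ne_zero h2 h1
        have hv2t : V.ν (2 * t n) = 0 := by rw [V.ν_mul 2 (t n) h2 h1]; omega
        have hdiff : t (n + 1) - t n = (c - t n ^ 2) / (2 * t n) := by
          rw [htS]; field_simp; ring
        have hnum : c - t n ^ 2 ≠ 0 := fun h => hne' (by linear_combination -h)
        have hdne : t (n + 1) - t n ≠ 0 := by
          rw [hdiff]; exact div_ne_zero hnum h2t
        have hdv : V.ν (t (n + 1) - t n) = V.ν (t n ^ 2 - c) := by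
          rw [hdiff, nu_div V _ _ hnum h2t, hv2t,
            show c - t n ^ 2 = -(t n ^ 2 - c) by ring, nu_neg V _ hne']
          omega
        have hdom := add_dom V (t n) (t (n + 1) - t n) h1 hdne (by omega)
        rw [show t n + (t (n + 1) - t n) = t (n + 1) by ring] at hdom
        refine ⟨hdom.1, by omega, Or.inr ⟨?_, ?_⟩⟩
        · rw [htS, show ((t n + c / t n) / 2) ^ 2 - c = (t n ^ 2 - c) ^ 2 / (2 * t n) ^ 2 by
            field_simp; ring]
          exact div_ne_zero (pow_ne_zero 2 hne') (pow_ne_zero 2 h2t)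
        · rw [htS, show ((t n + c / t n) / 2) ^ 2 - c = (t n ^ 2 - c) ^ 2 / (2 * t n) ^ 2 by
            field_simp; ring,
            nu_div V _ _ (pow_ne_zero 2 hne') (pow_ne_zero 2 h2t),
            nu_pow2 V _ hne', nu_pow2 V _ h2t]
          omega
  have cau : ∀ n k : ℕ, t (n + k) - t n = 0 ∨ ((n : ℤ) + 1) ≤ V.ν (t (n + k) - t n) := by
    intro n k
    induction k with
    | zero => left; simp
    | succ k ih =>
      have step : t (n + k + 1) - t (n + k) = 0 ∨ ((n : ℤ) + 1) ≤ V.ν (t (n + k + 1) - t (n + k)) := by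
        obtain ⟨h1, hv1, h3⟩ := inv (n + k)
        have hdiff : t (n + k + 1) - t (n + k) = (c - t (n + k) ^ 2) / (2 * t (n + k)) := by
          rw [htS]; field_simp; ring
        rcases h3 with heq | ⟨hne', hge'⟩
        · left
          rw [hdiff, show c - t (n + k) ^ 2 = -(t (n + k) ^ 2 - c) by ring, heq]
          simp
        · right
          have h2t : (2 : K) * t (n + k) ≠ 0 := mul_ne_zero h2 h1
          have hv2t : V.ν (2 * t (n + k)) = 0 := by rw [V.ν_mul 2 _ h2 h1]; omega
          have hnum : c - t (n + k) ^ 2 ≠ 0 := fun h => hne' (by linear_combination -h)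
          rw [hdiff, nu_div V _ _ hnum h2t, hv2t,
            show c - t (n + k) ^ 2 = -(t (n + k) ^ 2 - c) by ring, nu_neg V _ hne']
          omega
      have h := ge_add V ((n : ℤ) + 1) _ _ step ih
      rw [show t (n + k + 1) - t (n + k) + (t (n + k) - t n) = t (n + (k + 1)) - t n by
        rw [show n + (k + 1) = n + k + 1 from rfl]; ring] at h
      exact h
  have hCau : ∀ M : ℤ, ∃ N : ℕ, ∀ m n : ℕ, N ≤ m → N ≤ n →
      t m - t n = 0 ∨ M ≤ V.ν (t m - t n) := by
    intro M
    refine ⟨M.toNat, ?_⟩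
    have key : ∀ m n : ℕ, M.toNat ≤ n → n ≤ m → t m - t n = 0 ∨ M ≤ V.ν (t m - t n) := by
      intro m n hN hnm
      obtain ⟨k, rfl⟩ := Nat.le.dest hnm
      rcases cau n k with h | h
      · exact Or.inl h
      · right
        have h1 : (M.toNat : ℤ) ≤ (n : ℤ) := by exact_mod_cast hN
        have h2' := Int.self_le_toNat M
        omega
    intro m n hm hn
    rcases le_total n m with h | h
    · exact key m n hn h
    · by_cases hz : t n - t m = 0
      · left; rw [show t m - t n = -(t n - t m) by ring, hz, neg_zero]
      · rcases key n m hm h with h0 | h0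
        · exact absurd h0 hz
        · right; rw [show t m - t n = -(t n - t m) by ring, nu_neg V _ hz]; exact h0
  obtain ⟨L, hL⟩ := hcomp t hCau
  have hLc : c - L ^ 2 = 0 := by
    by_contra hne2
    set v := V.ν (c - L ^ 2) with hv
    set M : ℤ := max v 0 + 1 with hM
    obtain ⟨N, hN⟩ := hL M
    set n := N + M.toNat + v.toNat + 1 with hn
    have hnN : N ≤ n := by omega
    have hnv : (v : ℤ) + 1 ≤ (n : ℤ) + 1 := by
      have := Int.self_le_toNat v
      have : (v.toNat : ℤ) ≤ (n : ℤ) := by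
        have : v.toNat ≤ n := by omega
        exact_mod_cast this
      omega
    obtain ⟨h1, hv1, h3⟩ := inv n
    by_cases hz : t n - L = 0
    · have hLe : t n = L := by linear_combination hz
      rcases h3 with heq | ⟨hne', hge'⟩
      · exact hne2 (by rw [← hLe]; linear_combination -heq)
      · have hvv : V.ν (c - L ^ 2) = V.ν (t n ^ 2 - c) := by
          rw [← hLe, show c - t n ^ 2 = -(t n ^ 2 - c) by ring, nu_neg V _ hne']
        have := Int.self_le_toNat v
        omega
    · have hgeL : M ≤ V.ν (t n - L) := (hN n hnN).resolve_left hz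
      have hM1 : (1 : ℤ) ≤ M := by omega
      have hlt : V.ν (t n) < V.ν (-(t n - L)) := by rw [nu_neg V _ hz]; omega
      have hdom := add_dom V (t n) (-(t n - L)) h1 (neg_ne_zero.mpr hz) hlt
      rw [show t n + -(t n - L) = L by ring] at hdom
      have h2t : (2 : K) * t n ≠ 0 := mul_ne_zero h2 h1
      have hv2t : V.ν (2 * t n) = 0 := by rw [V.ν_mul 2 _ h2 h1]; omega
      have hlt2 : V.ν (2 * t n) < V.ν (-(t n - L)) := by rw [nu_neg V _ hz]; omega
      have hdom2 := add_dom V (2 * t n) (-(t n - L)) h2t (neg_ne_zero.mpr hz) hlt2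
      rw [show 2 * t n + -(t n - L) = t n + L by ring] at hdom2
      have hp1z : t n ^ 2 - L ^ 2 ≠ 0 := by
        rw [show t n ^ 2 - L ^ 2 = (t n - L) * (t n + L) by ring]
        exact mul_ne_zero hz hdom2.1
      have hp1v : V.ν (t n ^ 2 - L ^ 2) = V.ν (t n - L) + V.ν (t n + L) := by
        rw [show t n ^ 2 - L ^ 2 = (t n - L) * (t n + L) by ring,
          V.ν_mul _ _ hz hdom2.1]
      have g1 : c - t n ^ 2 = 0 ∨ (v + 1 : ℤ) ≤ V.ν (c - t n ^ 2) := by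
        rcases h3 with heq | ⟨hne', hge'⟩
        · left; linear_combination -heq
        · right
          rw [show c - t n ^ 2 = -(t n ^ 2 - c) by ring, nu_neg V _ hne']
          omega
      have g2 : t n ^ 2 - L ^ 2 = 0 ∨ (v + 1 : ℤ) ≤ V.ν (t n ^ 2 - L ^ 2) := by
        right; rw [hp1v]; omega
      have h := ge_add V (v + 1) _ _ g1 g2
      rw [show c - t n ^ 2 + (t n ^ 2 - L ^ 2) = c - L ^ 2 by ring] at h
      rcases h with h0 | h0
      · exact hne2 h0
      · omega
  have hL2 : L ^ 2 = c := by linear_combination -hLc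
  refine ⟨L, ?_, hL2⟩
  rintro rfl
  rw [show ((0 : K)) ^ 2 = 0 by ring] at hL2
  exact hc0 hL2.symm

lemma key_nu_zero {K : Type} [Field K] (V : DVal K)
    (hcomp : V.IsComplete) (hchar : V.ResCharNeTwo)
    (a b : K) (ha0 : a ≠ 0) (hva : V.ν a = 0) (hb0 : b ≠ 0) (hvb : V.ν b = 0)
    (haniso : QAniso a b) (d e f g : K)
    (hd : d = 0 ∨ 0 ≤ V.ν d) (he : e = 0 ∨ 0 ≤ V.ν e)
    (hf : f = 0 ∨ 0 ≤ V.ν f) (hg : g = 0 ∨ 0 ≤ V.ν g)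
    (hu : (d ≠ 0 ∧ V.ν d = 0) ∨ (e ≠ 0 ∧ V.ν e = 0) ∨ (f ≠ 0 ∧ V.ν f = 0) ∨
      (g ≠ 0 ∧ V.ν g = 0)) :
    V.ν (d ^ 2 - a * e ^ 2 - b * f ^ 2 + a * b * g ^ 2) = 0 := by
  set Q := d ^ 2 - a * e ^ 2 - b * f ^ 2 + a * b * g ^ 2 with hQdef
  have hQ0 : Q ≠ 0 := by
    intro h0
    obtain ⟨hd0, he0, hf0, hg0⟩ := haniso d e f g h0
    rcases hu with ⟨h, _⟩ | ⟨h, _⟩ | ⟨h, _⟩ | ⟨h, _⟩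
    exacts [h hd0, h he0, h hf0, h hg0]
  have hsq : ∀ x : K, (x = 0 ∨ 0 ≤ V.ν x) → (x ^ 2 = 0 ∨ 0 ≤ V.ν (x ^ 2)) := by
    intro x hx
    have := ge_mul V 0 0 x x hx hx
    rw [← sq] at this
    simpa using this
  have hmulu : ∀ (w x : K), w ≠ 0 → V.ν w = 0 → (x = 0 ∨ 0 ≤ V.ν x) →
      (w * x = 0 ∨ 0 ≤ V.ν (w * x)) := by
    intro w x hw hwv hx
    have := ge_mul V 0 0 w x (Or.inr (le_of_eq hwv.symm)) hx
    simpa using this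
  have hnegt : ∀ x : K, (x = 0 ∨ 0 ≤ V.ν x) → (-x = 0 ∨ 0 ≤ V.ν (-x)) := by
    intro x hx
    rcases hx with rfl | hx
    · simp
    by_cases h0 : x = 0
    · simp [h0]
    · right; rw [nu_neg V x h0]; exact hx
  have hab0 : a * b ≠ 0 := mul_ne_zero ha0 hb0
  have hvab : V.ν (a * b) = 0 := by rw [V.ν_mul a b ha0 hb0]; omega
  have hQint : Q = 0 ∨ 0 ≤ V.ν Q := by
    have t1 := hsq d hd
    have t2 := hnegt _ (hmulu a (e ^ 2) ha0 hva (hsq e he))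
    have t3 := hnegt _ (hmulu b (f ^ 2) hb0 hvb (hsq f hf))
    have t4 := hmulu (a * b) (g ^ 2) hab0 hvab (hsq g hg)
    have h12 := ge_add V 0 _ _ t1 t2
    have h123 := ge_add V 0 _ _ h12 t3
    have h1234 := ge_add V 0 _ _ h123 t4
    rw [show d ^ 2 + -(a * e ^ 2) + -(b * f ^ 2) + a * b * g ^ 2 = Q by rw [hQdef]; ring]
      at h1234
    exact h1234
  have hQge : 0 ≤ V.ν Q := hQint.resolve_left hQ0
  by_contra hne0
  have hQ1 : 1 ≤ V.ν Q := by omega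
  rcases hu with ⟨hx0, hxv⟩ | ⟨hx0, hxv⟩ | ⟨hx0, hxv⟩ | ⟨hx0, hxv⟩
  · -- d is a unit
    have hcs : (a * e ^ 2 + b * f ^ 2 - a * b * g ^ 2) - d ^ 2 = -Q := by
      rw [hQdef]; ring
    obtain ⟨t, ht0, ht2⟩ := sqrt_exists V hcomp hchar _ d hx0 hxv
      (by rw [hcs]; simpa using hQ0) (by rw [hcs, nu_neg V _ hQ0]; exact hQ1)
    have h5 : t ^ 2 - a * e ^ 2 - b * f ^ 2 + a * b * g ^ 2 = 0 := by
      rw [ht2]; ring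
    exact ht0 (haniso t e f g h5).1
  · -- e is a unit
    have hcs : (d ^ 2 - b * f ^ 2 + a * b * g ^ 2) / a - e ^ 2 = Q / a := by
      rw [hQdef]; field_simp; ring
    obtain ⟨t, ht0, ht2⟩ := sqrt_exists V hcomp hchar _ e hx0 hxv
      (by rw [hcs]; exact div_ne_zero hQ0 ha0)
      (by rw [hcs, nu_div V _ _ hQ0 ha0]; omega)
    have h6 : a * t ^ 2 = d ^ 2 - b * f ^ 2 + a * b * g ^ 2 := by
      rw [ht2]; field_simp
    have h5 : d ^ 2 - a * t ^ 2 - b * f ^ 2 + a * b * g ^ 2 = 0 := by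
      linear_combination -h6
    exact ht0 (haniso d t f g h5).2.1
  · -- f is a unit
    have hcs : (d ^ 2 - a * e ^ 2 + a * b * g ^ 2) / b - f ^ 2 = Q / b := by
      rw [hQdef]; field_simp; ring
    obtain ⟨t, ht0, ht2⟩ := sqrt_exists V hcomp hchar _ f hx0 hxv
      (by rw [hcs]; exact div_ne_zero hQ0 hb0)
      (by rw [hcs, nu_div V _ _ hQ0 hb0]; omega)
    have h6 : b * t ^ 2 = d ^ 2 - a * e ^ 2 + a * b * g ^ 2 := by
      rw [ht2]; field_simp
    have h5 : d ^ 2 - a * e ^ 2 - b * t ^ 2 + a * b * g ^ 2 = 0 := by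
      linear_combination -h6
    exact ht0 (haniso d e t g h5).2.2.1
  · -- g is a unit
    have hcs : (a * e ^ 2 + b * f ^ 2 - d ^ 2) / (a * b) - g ^ 2 = -Q / (a * b) := by
      rw [hQdef]; field_simp; ring
    obtain ⟨t, ht0, ht2⟩ := sqrt_exists V hcomp hchar _ g hx0 hxv
      (by rw [hcs]; exact div_ne_zero (by simpa using hQ0) hab0)
      (by rw [hcs, nu_div V _ _ (by simpa using hQ0) hab0, nu_neg V _ hQ0]; omega)
    have h6 : a * b * t ^ 2 = a * e ^ 2 + b * f ^ 2 - d ^ 2 := by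
      rw [ht2]; field_simp
    have h5 : d ^ 2 - a * e ^ 2 - b * f ^ 2 + a * b * t ^ 2 = 0 := by
      linear_combination h6
    exact ht0 (haniso d e f t h5).2.2.2

/-- if `a, b ∈ O_K^×` and `D = ℍ[K,a,b]` is a division ring, then
`ν_K(Nrd u)` is even for every nonzero `u ∈ D`; hence `ν_D` takes integer values,
the value group of `D` is `ℤ`, and `π` is a uniformizer of `D`. -/
theorem stmt_13 (K : Type) [Field K] (V : DVal K)
    (hcomp : V.IsComplete) (hchar : V.ResCharNeTwo)
    (a b : K) (ha0 : a ≠ 0) (hva : V.ν a = 0) (hb0 : b ≠ 0) (hvb : V.ν b = 0)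
    (haniso : QAniso a b)
    (ϖ : K) (hϖ0 : ϖ ≠ 0) (hvϖ : V.ν ϖ = 1) :
    (∀ u : QuaternionAlgebra K a 0 b, u ≠ 0 →
        Even (V.ν (qnrd a b u)) ∧ ∃ n : ℤ, qnu V a b u = (n : ℚ)) ∧
      (∀ n : ℤ, ∃ u : QuaternionAlgebra K a 0 b, u ≠ 0 ∧ qnu V a b u = (n : ℚ)) ∧
      qnu V a b (⟨ϖ, 0, 0, 0⟩ : QuaternionAlgebra K a 0 b) = 1 := by
  classical
  have main : ∀ u : QuaternionAlgebra K a 0 b, u ≠ 0 →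
      ∃ m : ℤ, V.ν (qnrd a b u) = 2 * m := by
    intro u hu
    have hucoord : u.re ≠ 0 ∨ u.imI ≠ 0 ∨ u.imJ ≠ 0 ∨ u.imK ≠ 0 := by
      by_contra h
      push_neg at h
      obtain ⟨h1, h2, h3, h4⟩ := h
      exact hu (by ext <;> simp [h1, h2, h3, h4])
    obtain ⟨C, hC⟩ : ∃ C : ℤ, (u.re ≠ 0 ∧ V.ν u.re < C) ∨ (u.imI ≠ 0 ∧ V.ν u.imI < C) ∨
        (u.imJ ≠ 0 ∧ V.ν u.imJ < C) ∨ (u.imK ≠ 0 ∧ V.ν u.imK < C) := by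
      rcases hucoord with h | h | h | h
      exacts [⟨V.ν u.re + 1, Or.inl ⟨h, by omega⟩⟩,
        ⟨V.ν u.imI + 1, Or.inr (Or.inl ⟨h, by omega⟩)⟩,
        ⟨V.ν u.imJ + 1, Or.inr (Or.inr (Or.inl ⟨h, by omega⟩))⟩,
        ⟨V.ν u.imK + 1, Or.inr (Or.inr (Or.inr ⟨h, by omega⟩))⟩]
    set m1 := if u.re = 0 then C else V.ν u.re with hm1
    set m2 := if u.imI = 0 then C else V.ν u.imI with hm2
    set m3 := if u.imJ = 0 then C else V.ν u.imJ with hm3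
    set m4 := if u.imK = 0 then C else V.ν u.imK with hm4
    set m := min (min m1 m2) (min m3 m4) with hm
    have e1 : u.re ≠ 0 → m1 = V.ν u.re := fun h => by rw [hm1, if_neg h]
    have e2 : u.imI ≠ 0 → m2 = V.ν u.imI := fun h => by rw [hm2, if_neg h]
    have e3 : u.imJ ≠ 0 → m3 = V.ν u.imJ := fun h => by rw [hm3, if_neg h]
    have e4 : u.imK ≠ 0 → m4 = V.ν u.imK := fun h => by rw [hm4, if_neg h]
    have z1 : u.re = 0 → m1 = C := fun h => by rw [hm1, if_pos h]
    have z2 : u.imI = 0 → m2 = C := fun h => by rw [hm2, if_pos h]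
    have z3 : u.imJ = 0 → m3 = C := fun h => by rw [hm3, if_pos h]
    have z4 : u.imK = 0 → m4 = C := fun h => by rw [hm4, if_pos h]
    have hmC : m < C := by
      rcases hC with ⟨h, hlt⟩ | ⟨h, hlt⟩ | ⟨h, hlt⟩ | ⟨h, hlt⟩
      · have := e1 h; omega
      · have := e2 h; omega
      · have := e3 h; omega
      · have := e4 h; omega
    have hex : (u.re ≠ 0 ∧ V.ν u.re = m) ∨ (u.imI ≠ 0 ∧ V.ν u.imI = m) ∨
        (u.imJ ≠ 0 ∧ V.ν u.imJ = m) ∨ (u.imK ≠ 0 ∧ V.ν u.imK = m) := by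
      have h4 : m = m1 ∨ m = m2 ∨ m = m3 ∨ m = m4 := by omega
      rcases h4 with h | h | h | h
      · by_cases hz : u.re = 0
        · exact absurd (z1 hz) (by omega)
        · exact Or.inl ⟨hz, by have := e1 hz; omega⟩
      · by_cases hz : u.imI = 0
        · exact absurd (z2 hz) (by omega)
        · exact Or.inr (Or.inl ⟨hz, by have := e2 hz; omega⟩)
      · by_cases hz : u.imJ = 0
        · exact absurd (z3 hz) (by omega)
        · exact Or.inr (Or.inr (Or.inl ⟨hz, by have := e3 hz; omega⟩))
      · by_cases hz : u.imK = 0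
        · exact absurd (z4 hz) (by omega)
        · exact Or.inr (Or.inr (Or.inr ⟨hz, by have := e4 hz; omega⟩))
    obtain ⟨w, hw0, hwv⟩ := V.ν_surj m
    have hint : ∀ x : K, (x = u.re ∧ m ≤ m1) ∨ (x = u.imI ∧ m ≤ m2) ∨
        (x = u.imJ ∧ m ≤ m3) ∨ (x = u.imK ∧ m ≤ m4) →
        (x / w = 0 ∨ 0 ≤ V.ν (x / w)) := by
      intro x hx
      by_cases hz : x = 0
      · left; simp [hz]
      · right
        rw [nu_div V _ _ hz hw0, hwv]
        rcases hx with ⟨rfl, hle⟩ | ⟨rfl, hle⟩ | ⟨rfl, hle⟩ | ⟨rfl, hle⟩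
        · have := e1 hz; omega
        · have := e2 hz; omega
        · have := e3 hz; omega
        · have := e4 hz; omega
    have hd := hint u.re (Or.inl ⟨rfl, by omega⟩)
    have he := hint u.imI (Or.inr (Or.inl ⟨rfl, by omega⟩))
    have hf := hint u.imJ (Or.inr (Or.inr (Or.inl ⟨rfl, by omega⟩)))
    have hg := hint u.imK (Or.inr (Or.inr (Or.inr ⟨rfl, by omega⟩)))
    have hunit : (u.re / w ≠ 0 ∧ V.ν (u.re / w) = 0) ∨
        (u.imI / w ≠ 0 ∧ V.ν (u.imI / w) = 0) ∨
        (u.imJ / w ≠ 0 ∧ V.ν (u.imJ / w) = 0) ∨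
        (u.imK / w ≠ 0 ∧ V.ν (u.imK / w) = 0) := by
      rcases hex with ⟨h, hv⟩ | ⟨h, hv⟩ | ⟨h, hv⟩ | ⟨h, hv⟩
      · exact Or.inl ⟨div_ne_zero h hw0, by rw [nu_div V _ _ h hw0, hv, hwv]; omega⟩
      · exact Or.inr (Or.inl ⟨div_ne_zero h hw0, by
          rw [nu_div V _ _ h hw0, hv, hwv]; omega⟩)
      · exact Or.inr (Or.inr (Or.inl ⟨div_ne_zero h hw0, by
          rw [nu_div V _ _ h hw0, hv, hwv]; omega⟩))
      · exact Or.inr (Or.inr (Or.inr ⟨div_ne_zero h hw0, by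
          rw [nu_div V _ _ h hw0, hv, hwv]; omega⟩))
    have hQv := key_nu_zero V hcomp hchar a b ha0 hva hb0 hvb haniso
      (u.re / w) (u.imI / w) (u.imJ / w) (u.imK / w) hd he hf hg hunit
    set Q' := (u.re / w) ^ 2 - a * (u.imI / w) ^ 2 - b * (u.imJ / w) ^ 2 +
      a * b * (u.imK / w) ^ 2 with hQ'def
    have hQ'ne : Q' ≠ 0 := by
      intro h0
      obtain ⟨hd0, he0, hf0, hg0⟩ := haniso _ _ _ _ h0
      rcases hunit with ⟨h, _⟩ | ⟨h, _⟩ | ⟨h, _⟩ | ⟨h, _⟩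
      exacts [h hd0, h he0, h hf0, h hg0]
    have hQeq : qnrd a b u = Q' * w ^ 2 := by
      rw [hQ'def]
      simp only [qnrd]
      field_simp
    refine ⟨m, ?_⟩
    rw [hQeq, V.ν_mul _ _ hQ'ne (pow_ne_zero 2 hw0), hQv, nu_pow2 V w hw0, hwv]
    ring
  refine ⟨?_, ?_, ?_⟩
  · intro u hu
    obtain ⟨m, hm⟩ := main u hu
    refine ⟨⟨m, by omega⟩, ⟨m, ?_⟩⟩
    rw [qnu, hm]
    push_cast
    ring
  · intro n
    obtain ⟨w, hw0, hwv⟩ := V.ν_surj n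
    refine ⟨⟨w, 0, 0, 0⟩, ?_, ?_⟩
    · intro h
      exact hw0 (by simpa using congrArg QuaternionAlgebra.re h)
    · have hq : qnrd a b (⟨w, 0, 0, 0⟩ : QuaternionAlgebra K a 0 b) = w ^ 2 := by
        simp [qnrd]
      rw [qnu, hq, nu_pow2 V w hw0, hwv]
      push_cast
      ring
  · have hq : qnrd a b (⟨ϖ, 0, 0, 0⟩ : QuaternionAlgebra K a 0 b) = ϖ ^ 2 := by
      simp [qnrd]
    rw [qnu, hq, nu_pow2 V ϖ hϖ0, hvϖ]
    norm_num
end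
end
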